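/- arXiv:1804.10144 — 5 statements merged into one kernel-verified Lean document; each statement's English description precedes it below -/
import Mathlib

section
/- For nonnegative integers r, s, k, n with n ≥ r, the γ-connection coefficients can be expressed in terms of the b-connection coefficients by γ_{n−r,k}^{(r,s)} = Σ_{σ=0}^{n−(r+k)} [b_{σ+k+s, k+s}/(σ+k+s)!] · (d^{r+k+σ} P_n/dx^{r+k+σ})(−a). -/
open Polynomial Finset

private lemma iter_deriv_degree (p : Polynomial ℂ) (d s : ℕ) (hd : p.degree = (d : WithBot ℕ))
    (hs : s ≤ d) : (Polynomial.derivative^[s] p).degree = ((d - s : ℕ) : WithBot ℕ) := by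
  induction s with
  | zero => simpa using hd
  | succ t ih =>
    have ht : t ≤ d := by omega
    have h1 := ih ht
    have hnd : (Polynomial.derivative^[t] p).natDegree = d - t :=
      natDegree_eq_of_degree_eq_some h1
    rw [Function.iterate_succ_apply', degree_derivative_eq _ (by omega), hnd]
    congr 1

private lemma uniqZeroAux (Q : ℕ → Polynomial ℂ) (hQd : ∀ j, (Q j).degree = (j : WithBot ℕ)) :
    ∀ (M : ℕ) (δ : ℕ → ℂ),
      (∑ j ∈ Finset.range (M + 1), Polynomial.C (δ j) * Q j = 0) →
      ∀ j ≤ M, δ j = 0 := by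
  have hQ0 : ∀ j, Q j ≠ 0 := by
    intro j h
    have := hQd j
    rw [h, degree_zero] at this
    simp at this
  have hQn : ∀ j, (Q j).natDegree = j := fun j => natDegree_eq_of_degree_eq_some (hQd j)
  intro M
  induction M with
  | zero =>
    intro δ h j hj
    interval_cases j
    rw [Finset.sum_range_one] at h
    rcases mul_eq_zero.1 h with h' | h'
    · exact Polynomial.C_eq_zero.1 h'
    · exact absurd h' (hQ0 0)
  | succ M ih =>
    intro δ h j hj
    rw [Finset.sum_range_succ] at h
    have htop : δ (M + 1) = 0 := by
      have hc : (∑ j ∈ Finset.range (M + 1), Polynomial.C (δ j) * Q j).coeff (M + 1)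
          + (Polynomial.C (δ (M + 1)) * Q (M + 1)).coeff (M + 1) = 0 := by
        rw [← Polynomial.coeff_add, h, Polynomial.coeff_zero]
      rw [Polynomial.finset_sum_coeff] at hc
      have h1 : ∀ i ∈ Finset.range (M + 1), (Polynomial.C (δ i) * Q i).coeff (M + 1) = 0 := by
        intro i hi
        rw [Polynomial.coeff_C_mul, Polynomial.coeff_eq_zero_of_natDegree_lt, mul_zero]
        rw [hQn i]
        exact Finset.mem_range.1 hi
      rw [Finset.sum_eq_zero h1, zero_add, Polynomial.coeff_C_mul] at hc
      have h2 : (Q (M + 1)).coeff (M + 1) ≠ 0 := by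
        have := Polynomial.leadingCoeff_ne_zero.2 (hQ0 (M + 1))
        rwa [Polynomial.leadingCoeff, hQn (M + 1)] at this
      exact (mul_eq_zero.1 hc).resolve_right h2
    rcases Nat.lt_succ_iff_lt_or_eq.1 (Nat.lt_succ_of_le hj) with hj' | hj'
    · have h' : ∑ j ∈ Finset.range (M + 1), Polynomial.C (δ j) * Q j = 0 := by
        rwa [htop, map_zero, zero_mul, add_zero] at h
      exact ih δ h' j (by omega)
    · rwa [hj']

/-- **Lemma (γ-coefficients in terms of b-coefficients).**
Let `P k` be a polynomial sequence with `deg P k = k` and `a` a real constant.  Let `b N k`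
be the connection coefficients of `(x+a)^N` in the basis `P k`, and for fixed `r, s` let
`γ (N - r) k` be the connection coefficients of `d^r P_N / dx^r` in the basis
`d^s P_{k+s} / dx^s`.  Then for `n ≥ r` and `k ≤ n - r`,
`γ (n-r) k = ∑_{σ=0}^{n-(r+k)} b_{σ+k+s, k+s} / (σ+k+s)! · (d^{r+k+σ} P_n/dx^{r+k+σ})(-a)`. -/
theorem stmt1
    (P : ℕ → Polynomial ℂ) (hP : ∀ k, (P k).degree = (k : WithBot ℕ))
    (a : ℝ) (r s : ℕ)
    (b : ℕ → ℕ → ℂ)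
    (hb : ∀ N, (Polynomial.X + Polynomial.C (a : ℂ)) ^ N =
      ∑ k ∈ Finset.range (N + 1), Polynomial.C (b N k) * P k)
    (γ : ℕ → ℕ → ℂ)
    (hγ : ∀ N, r ≤ N → Polynomial.derivative^[r] (P N) =
      ∑ k ∈ Finset.range (N - r + 1),
        Polynomial.C (γ (N - r) k) * Polynomial.derivative^[s] (P (k + s)))
    (n k : ℕ) (hn : r ≤ n) (hk : k ≤ n - r) :
    γ (n - r) k = ∑ σ ∈ Finset.range (n - (r + k) + 1),
      b (σ + k + s) (k + s) / ((σ + k + s).factorial : ℂ) *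
        (Polynomial.derivative^[r + k + σ] (P n)).eval (-(a : ℂ)) := by
  classical
  have hPn : ∀ j, (P j).natDegree = j := fun j => natDegree_eq_of_degree_eq_some (hP j)
  set M := n - r with hM
  set Q : ℕ → Polynomial ℂ := fun j => Polynomial.derivative^[s] (P (j + s)) with hQ
  have hQd : ∀ j, (Q j).degree = (j : WithBot ℕ) := by
    intro j
    have := iter_deriv_degree (P (j + s)) (j + s) s (hP (j + s)) (Nat.le_add_left s j)
    simp only [hQ]
    simpa [Nat.add_sub_cancel] using this
  set f := Polynomial.derivative^[r] (P n) with hf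
  have hfd : f.natDegree ≤ M := by
    have := Polynomial.natDegree_iterate_derivative (P n) r
    rwa [hPn n] at this
  set g := Polynomial.taylor (-(a : ℂ)) f with hg
  set e : ℕ → ℂ := fun j => ∑ σ ∈ Finset.range (M - j + 1),
    b (σ + j + s) (j + s) / ((σ + j + s).factorial : ℂ) *
      (Polynomial.derivative^[r + j + σ] (P n)).eval (-(a : ℂ)) with he
  -- Taylor expansion of f
  have hgd : g.natDegree < M + 1 := by
    rw [hg, Polynomial.natDegree_taylor]; omega
  have hgsum : g = ∑ m ∈ Finset.range (M + 1), Polynomial.C (g.coeff m) * X ^ m := by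
    conv_lhs => rw [Polynomial.as_sum_range' g (M + 1) hgd]
    exact Finset.sum_congr rfl fun m _ => (Polynomial.C_mul_X_pow_eq_monomial).symm
  have hfsum : f = ∑ m ∈ Finset.range (M + 1),
      Polynomial.C (g.coeff m) * (X + Polynomial.C (a : ℂ)) ^ m := by
    have h1 : Polynomial.taylor (a : ℂ) g = f := by
      rw [hg, Polynomial.taylor_taylor]
      simp
    rw [← h1]
    conv_lhs => rw [hgsum]
    rw [map_sum]
    refine Finset.sum_congr rfl fun m _ => ?_
    rw [Polynomial.taylor_apply, Polynomial.mul_comp, Polynomial.C_comp, Polynomial.pow_comp,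
      Polynomial.X_comp]
  have hcoeff : ∀ m, g.coeff m
      = (Polynomial.derivative^[r + m] (P n)).eval (-(a : ℂ)) / (m.factorial : ℂ) := by
    intro m
    rw [hg, Polynomial.taylor_coeff]
    have h2 := congrFun (Polynomial.factorial_smul_hasseDeriv (R := ℂ) m) f
    rw [LinearMap.smul_apply] at h2
    have h3 : Polynomial.derivative^[m] f = Polynomial.derivative^[r + m] (P n) := by
      rw [hf, add_comm, Function.iterate_add_apply]
    rw [h3] at h2
    have h4 := congrArg (Polynomial.eval (-(a : ℂ))) h2
    rw [nsmul_eq_mul, Polynomial.eval_mul, Polynomial.eval_natCast] at h4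
    have hm0 : (m.factorial : ℂ) ≠ 0 := Nat.cast_ne_zero.2 m.factorial_ne_zero
    rw [eq_div_iff hm0]
    linear_combination h4
  -- expansion of (X + C a)^m in the Q basis
  have hexp : ∀ m, ((m + s).descFactorial s) • ((X + Polynomial.C (a : ℂ)) ^ m)
      = ∑ j ∈ Finset.range (m + 1), Polynomial.C (b (m + s) (j + s)) * Q j := by
    intro m
    simp only [hQ]
    have h1 := congrArg (fun p => Polynomial.derivative^[s] p) (hb (m + s))
    rw [Polynomial.iterate_derivative_X_add_pow, Nat.add_sub_cancel] at h1
    rw [h1, Polynomial.iterate_derivative_sum]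
    have hsplit : ∀ j, Polynomial.derivative^[s] (Polynomial.C (b (m + s) j) * P j)
        = Polynomial.C (b (m + s) j) * Polynomial.derivative^[s] (P j) :=
      fun j => Polynomial.iterate_derivative_C_mul _ _ _
    simp only [hsplit]
    rw [show m + s + 1 = s + (m + 1) by omega, Finset.sum_range_add]
    have hz : ∀ j ∈ Finset.range s,
        Polynomial.C (b (m + s) j) * Polynomial.derivative^[s] (P j) = 0 := by
      intro j hj
      rw [Polynomial.iterate_derivative_eq_zero, mul_zero]
      rw [hPn j]
      exact Finset.mem_range.1 hj
    rw [Finset.sum_eq_zero hz, zero_add]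
    refine Finset.sum_congr rfl fun j _ => ?_
    rw [add_comm s j]
  have hfac : ∀ m : ℕ, (m.factorial : ℂ) * (((m + s).descFactorial s : ℕ) : ℂ)
      = ((m + s).factorial : ℂ) := by
    intro m
    rw [← Nat.cast_mul]
    norm_cast
    have := Nat.factorial_mul_descFactorial (n := m + s) (k := s) (Nat.le_add_left s m)
    simpa [Nat.add_sub_cancel] using this
  have hd0 : ∀ m : ℕ, (((m + s).descFactorial s : ℕ) : ℂ) ≠ 0 := by
    intro m h
    have := hfac m
    rw [h, mul_zero] at this
    exact (Nat.cast_ne_zero.2 (m + s).factorial_ne_zero) this.symm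
  have hstep : ∀ m, (X + Polynomial.C (a : ℂ)) ^ m
      = ∑ j ∈ Finset.range (m + 1),
          Polynomial.C ((((m + s).descFactorial s : ℕ) : ℂ)⁻¹ * b (m + s) (j + s)) * Q j := by
    intro m
    have h2 : (X + Polynomial.C (a : ℂ)) ^ m
        = Polynomial.C ((((m + s).descFactorial s : ℕ) : ℂ)⁻¹) *
          ∑ j ∈ Finset.range (m + 1), Polynomial.C (b (m + s) (j + s)) * Q j := by
      rw [← hexp m, nsmul_eq_mul, ← Polynomial.C_eq_natCast, ← mul_assoc, ← Polynomial.C_mul,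
        inv_mul_cancel₀ (hd0 m), Polynomial.C_1, one_mul]
    rw [h2, Finset.mul_sum]
    refine Finset.sum_congr rfl fun j _ => ?_
    rw [← mul_assoc, ← Polynomial.C_mul]
  -- the alternative expansion of f in the Q basis
  have key : f = ∑ j ∈ Finset.range (M + 1), Polynomial.C (e j) * Q j := by
    rw [hfsum]
    calc ∑ m ∈ Finset.range (M + 1), Polynomial.C (g.coeff m) * (X + Polynomial.C (a : ℂ)) ^ m
        = ∑ m ∈ Finset.range (M + 1), ∑ j ∈ Finset.range (m + 1),
            Polynomial.C (g.coeff m *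
              ((((m + s).descFactorial s : ℕ) : ℂ)⁻¹ * b (m + s) (j + s))) * Q j := by
          refine Finset.sum_congr rfl fun m _ => ?_
          rw [hstep m, Finset.mul_sum]
          refine Finset.sum_congr rfl fun j _ => ?_
          rw [← mul_assoc, ← Polynomial.C_mul]
      _ = ∑ j ∈ Finset.range (M + 1), ∑ m ∈ Finset.Ico j (M + 1),
            Polynomial.C (g.coeff m *
              ((((m + s).descFactorial s : ℕ) : ℂ)⁻¹ * b (m + s) (j + s))) * Q j := by
          refine Finset.sum_comm' ?_
          intro m j
          simp only [Finset.mem_range, Finset.mem_Ico]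
          omega
      _ = ∑ j ∈ Finset.range (M + 1), Polynomial.C (e j) * Q j := by
          refine Finset.sum_congr rfl fun j hj => ?_
          have hjM : j ≤ M := Nat.lt_succ_iff.1 (Finset.mem_range.1 hj)
          rw [Finset.sum_Ico_eq_sum_range, show M + 1 - j = M - j + 1 by omega,
            ← Finset.sum_mul, he]
          rw [show (Polynomial.C (∑ σ ∈ Finset.range (M - j + 1),
              b (σ + j + s) (j + s) / ((σ + j + s).factorial : ℂ) *
                (Polynomial.derivative^[r + j + σ] (P n)).eval (-(a : ℂ)))) =
              ∑ σ ∈ Finset.range (M - j + 1),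
                Polynomial.C (b (σ + j + s) (j + s) / ((σ + j + s).factorial : ℂ) *
                  (Polynomial.derivative^[r + j + σ] (P n)).eval (-(a : ℂ)))
            from map_sum Polynomial.C _ _]
          congr 1
          refine Finset.sum_congr rfl fun σ _ => ?_
          rw [hcoeff (j + σ), show σ + j + s = j + σ + s by omega,
            show r + j + σ = r + (j + σ) by omega]
          have h1 := hfac (j + σ)
          have hm0 : ((j + σ).factorial : ℂ) ≠ 0 := Nat.cast_ne_zero.2 (j + σ).factorial_ne_zero
          have hm1 : ((j + σ + s).factorial : ℂ) ≠ 0 :=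
            Nat.cast_ne_zero.2 (j + σ + s).factorial_ne_zero
          congr 1
          field_simp
          linear_combination -(Polynomial.derivative^[r + (j + σ)] (P n)).eval (-(a : ℂ)) *
            b (j + σ + s) (j + s) * h1
  -- uniqueness of expansion
  have hγn := hγ n hn
  rw [← hf, ← hM] at hγn
  have hγn' : f = ∑ j ∈ Finset.range (M + 1), Polynomial.C (γ M j) * Q j := by
    simp only [hQ]
    exact hγn
  have hdiff : ∑ j ∈ Finset.range (M + 1), Polynomial.C (γ M j - e j) * Q j = 0 := by
    simp only [map_sub, sub_mul, Finset.sum_sub_distrib]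
    rw [← hγn', ← key, sub_self]
  have hzero := uniqZeroAux Q hQd M _ hdiff k hk
  have hγk : γ M k = e k := sub_eq_zero.1 hzero
  rw [show n - (r + k) = M - k by omega, hγk, he]
end

section
/- For nonnegative integers m, n and 0 ≤ j ≤ m+n+1, the convolution coefficients are given by ρ_{j,n}^m = Σ_{p=j}^{m+n+1} (b_{p,j}/p!) Σ_{ν=1}^{p} (d^{p−ν} P_m/dx^{p−ν})(−a) · (d^{ν−1} P_n/dx^{ν−1})(−a), where the inner sum is understood to be zero when p = 0. -/
open Polynomial intervalIntegral

set_option maxHeartbeats 1000000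

lemma beta_base (k : ℕ) (c d : ℝ) :
    ∫ t in c..d, (t - c)^k = ((k.factorial : ℝ) / (k+1).factorial) * (d - c)^(k+1) := by
  have h : (∫ t in c..d, (t - c)^k) = ∫ t in c - c..d - c, t ^ k :=
    intervalIntegral.integral_comp_sub_right (fun u => u ^ k) c
  rw [h, sub_self, integral_pow, Nat.factorial_succ, zero_pow (Nat.succ_ne_zero k)]
  push_cast
  have : (k:ℝ) + 1 ≠ 0 := by positivity
  have : (k.factorial : ℝ) ≠ 0 := by positivity
  field_simp
  ring

lemma beta_int (i : ℕ) : ∀ (k : ℕ) (c d : ℝ),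
    ∫ t in c..d, (d - t)^i * (t - c)^k
      = ((i.factorial : ℝ) * k.factorial / (i+k+1).factorial) * (d - c)^(i+k+1) := by
  induction i with
  | zero =>
    intro k c d
    simpa using beta_base k c d
  | succ i ih =>
    intro k c d
    have hu : ∀ t ∈ Set.uIcc c d, HasDerivAt (fun t => (d - t)^(i+1))
        (-(((i:ℝ)+1) * (d - t)^i)) t := by
      intro t _
      have h1 : HasDerivAt (fun t : ℝ => d - t) (-1) t := by
        simpa using (hasDerivAt_id t).const_sub d
      have h2 := h1.fun_pow (i+1)
      refine h2.congr_deriv ?_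
      push_cast
      ring
    have hv : ∀ t ∈ Set.uIcc c d, HasDerivAt (fun t => (t - c)^(k+1) / ((k:ℝ)+1))
        ((t - c)^k) t := by
      intro t _
      have h1 : HasDerivAt (fun t : ℝ => t - c) 1 t := by
        simpa using (hasDerivAt_id t).sub_const c
      have h2 := (h1.fun_pow (k+1)).div_const ((k:ℝ)+1)
      have hk : ((k:ℝ)+1) ≠ 0 := by positivity
      refine h2.congr_deriv ?_
      push_cast
      field_simp
    have hIBP := intervalIntegral.integral_mul_deriv_eq_deriv_mul hu hv
      (by apply Continuous.intervalIntegrable; continuity)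
      (by apply Continuous.intervalIntegrable; continuity)
    simp only [sub_self, zero_pow (Nat.succ_ne_zero i), zero_mul, mul_zero, zero_sub, zero_div,
      sub_zero, zero_mul, neg_zero, zero_sub] at hIBP
    rw [hIBP]
    have h3 : (∫ t in c..d, -(((i:ℝ)+1) * (d - t)^i) * ((t - c)^(k+1) / ((k:ℝ)+1)))
        = -((((i:ℝ)+1)/((k:ℝ)+1)) * ∫ t in c..d, (d - t)^i * (t - c)^(k+1)) := by
      rw [← intervalIntegral.integral_const_mul, ← intervalIntegral.integral_neg]
      congr 1; ext t; ring
    rw [h3, ih (k+1) c d]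
    have h2 : (i+(k+1)+1) = ((i+1)+k+1) := by ring
    rw [h2]
    have hk : ((k:ℝ)+1) ≠ 0 := by positivity
    have hfac : ((i+1+k+1).factorial : ℝ) ≠ 0 := by positivity
    have hfac2 : ((i+1+k).factorial : ℝ) ≠ 0 := by positivity
    have hstep : ((i+1+k+1).factorial : ℝ) = ((i:ℝ)+1+k+1) * (i+1+k).factorial := by
      rw [show (i+1+k+1) = (i+1+k)+1 from rfl, Nat.factorial_succ]
      push_cast; ring
    push_cast [Nat.factorial_succ] at *
    field_simp
    ring

lemma taylor_eval_aux (f : Polynomial ℂ) (N : ℕ) (hN : f.natDegree ≤ N) (r z : ℂ) :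
    f.eval z = ∑ i ∈ Finset.range (N+1),
      ((Polynomial.derivative^[i] f).eval r / (i.factorial : ℂ)) * (z - r)^i := by
  conv_lhs => rw [← Polynomial.sum_taylor_eq f r]
  rw [Polynomial.sum_over_range' _ (by intro n; simp) (N+1)
    (by rw [Polynomial.natDegree_taylor]; omega)]
  rw [Polynomial.eval_finset_sum]
  apply Finset.sum_congr rfl
  intro i _
  rw [Polynomial.taylor_coeff]
  have h := congrFun (Polynomial.factorial_smul_hasseDeriv (R := ℂ) i) f
  simp only [LinearMap.smul_apply, Pi.smul_apply] at h
  have h2 : (i.factorial : ℂ) • (Polynomial.hasseDeriv i f) = Polynomial.derivative^[i] f := by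
    rw [← h]; simp [Nat.cast_smul_eq_nsmul]
  have h3 : (Polynomial.hasseDeriv i f).eval r
      = (Polynomial.derivative^[i] f).eval r / (i.factorial : ℂ) := by
    rw [← h2]
    simp only [Polynomial.eval_smul, smul_eq_mul]
    field_simp [Nat.cast_ne_zero.mpr (Nat.factorial_ne_zero i)]
  simp [h3]

lemma pure_int (i k : ℕ) (a x : ℝ) :
    (∫ t in (-a)..(x+a), ((x:ℂ) - (t:ℂ) + a)^i * ((t:ℂ) + a)^k)
      = (((i.factorial : ℝ) * k.factorial / (i+k+1).factorial) : ℝ) * ((x:ℂ) + 2*a)^(i+k+1) := by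
  have h1 : (∫ t in (-a)..(x+a), ((x:ℂ) - (t:ℂ) + a)^i * ((t:ℂ) + a)^k)
      = ∫ t in (-a)..(x+a), ((((x+a) - t)^i * (t - (-a))^k : ℝ) : ℂ) := by
    apply intervalIntegral.integral_congr
    intro t _
    push_cast
    ring
  rw [h1, intervalIntegral.integral_ofReal, beta_int i k (-a) (x+a)]
  push_cast
  ring_nf

lemma conv_key (f g : Polynomial ℂ) (M N : ℕ) (hf : f.natDegree ≤ M) (hg : g.natDegree ≤ N)
    (a x : ℝ) :
    (∫ t in (-a)..(x+a), f.eval ((x:ℂ) - (t:ℂ)) * g.eval (t:ℂ))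
      = ∑ i ∈ Finset.range (M+1), ∑ k ∈ Finset.range (N+1),
        (Polynomial.derivative^[i] f).eval (-(a:ℂ)) * (Polynomial.derivative^[k] g).eval (-(a:ℂ))
          / (((i+k+1).factorial : ℂ)) * ((x:ℂ) + 2*a)^(i+k+1) := by
  set cm : ℕ → ℂ := fun i => (Polynomial.derivative^[i] f).eval (-(a:ℂ)) / (i.factorial : ℂ)
    with hcm
  set cn : ℕ → ℂ := fun k => (Polynomial.derivative^[k] g).eval (-(a:ℂ)) / (k.factorial : ℂ)
    with hcn
  have h1 : (∫ t in (-a)..(x+a), f.eval ((x:ℂ) - (t:ℂ)) * g.eval (t:ℂ))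
      = ∫ t in (-a)..(x+a), ∑ i ∈ Finset.range (M+1), ∑ k ∈ Finset.range (N+1),
          (cm i * cn k) * (((x:ℂ) - (t:ℂ) + a)^i * ((t:ℂ) + a)^k) := by
    apply intervalIntegral.integral_congr
    intro t _
    show f.eval ((x:ℂ) - (t:ℂ)) * g.eval (t:ℂ) = _
    rw [taylor_eval_aux f M hf (-(a:ℂ)) ((x:ℂ) - t), taylor_eval_aux g N hg (-(a:ℂ)) (t:ℂ),
      Finset.sum_mul_sum]
    apply Finset.sum_congr rfl; intro i _
    apply Finset.sum_congr rfl; intro k _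
    simp only [hcm, hcn, sub_neg_eq_add]
    ring
  rw [h1]
  rw [intervalIntegral.integral_finset_sum]
  · apply Finset.sum_congr rfl; intro i _
    rw [intervalIntegral.integral_finset_sum]
    · apply Finset.sum_congr rfl; intro k _
      rw [intervalIntegral.integral_const_mul, pure_int i k a x]
      simp only [hcm, hcn]
      have h2 : ((i.factorial : ℂ)) ≠ 0 := Nat.cast_ne_zero.mpr (Nat.factorial_ne_zero i)
      have h3 : ((k.factorial : ℂ)) ≠ 0 := Nat.cast_ne_zero.mpr (Nat.factorial_ne_zero k)
      have h4 : (((i+k+1).factorial : ℂ)) ≠ 0 := Nat.cast_ne_zero.mpr (Nat.factorial_ne_zero _)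
      push_cast
      field_simp
    · intro k _
      apply Continuous.intervalIntegrable
      fun_prop
  · intro i _
    apply Continuous.intervalIntegrable
    apply continuous_finset_sum
    intro k _
    fun_prop

lemma reindex (m n : ℕ) (Dm Dn : ℕ → ℂ) (hDm : ∀ i, m < i → Dm i = 0)
    (hDn : ∀ k, n < k → Dn k = 0) (y : ℂ) :
    ∑ i ∈ Finset.range (m+1), ∑ k ∈ Finset.range (n+1),
        Dm i * Dn k / (((i+k+1).factorial : ℂ)) * y^(i+k+1)
      = ∑ p ∈ Finset.range (m+n+2),
          (1/(p.factorial : ℂ)) * (∑ ν ∈ Finset.Icc 1 p, Dm (p-ν) * Dn (ν-1)) * y^p := by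
  set F : ℕ → ℕ → ℂ := fun i k => Dm i * Dn k / (((i+k+1).factorial : ℂ)) * y^(i+k+1) with hF
  set T : Finset (ℕ × ℕ) :=
    (Finset.range (m+n+1) ×ˢ Finset.range (m+n+1)).filter (fun q => q.1 + q.2 ≤ m+n) with hT
  have hstep1 : ∀ p ∈ Finset.range (m+n+2),
      (1/(p.factorial : ℂ)) * (∑ ν ∈ Finset.Icc 1 p, Dm (p-ν) * Dn (ν-1)) * y^p
        = ∑ ν ∈ Finset.Icc 1 p, F (p-ν) (ν-1) := by
    intro p _
    rw [Finset.mul_sum, Finset.sum_mul]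
    apply Finset.sum_congr rfl
    intro ν hν
    simp only [Finset.mem_Icc] at hν
    have harith : (p-ν) + (ν-1) + 1 = p := by omega
    simp only [hF, harith]
    ring
  have h2 : ∑ p ∈ Finset.range (m+n+2), ∑ ν ∈ Finset.Icc 1 p, F (p-ν) (ν-1)
      = ∑ q ∈ T, F q.1 q.2 := by
    rw [Finset.sum_sigma']
    apply Finset.sum_nbij' (i := fun x => (x.1 - x.2, x.2 - 1))
      (j := fun q => ⟨q.1 + q.2 + 1, q.2 + 1⟩)
    · rintro ⟨p, ν⟩ hx
      simp only [Finset.mem_sigma, Finset.mem_range, Finset.mem_Icc] at hx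
      simp only [hT, Finset.mem_filter, Finset.mem_product, Finset.mem_range]
      refine ⟨⟨?_, ?_⟩, ?_⟩ <;> omega
    · rintro ⟨i, k⟩ hq
      simp only [hT, Finset.mem_filter, Finset.mem_product, Finset.mem_range] at hq
      simp only [Finset.mem_sigma, Finset.mem_range, Finset.mem_Icc]
      omega
    · rintro ⟨p, ν⟩ hx
      simp only [Finset.mem_sigma, Finset.mem_range, Finset.mem_Icc] at hx
      simp only [Sigma.mk.inj_iff, heq_eq_eq]
      constructor <;> omega
    · rintro ⟨i, k⟩ hq
      simp only [Prod.mk.injEq]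
      constructor <;> omega
    · rintro ⟨p, ν⟩ _
      rfl
  have h3 : ∑ i ∈ Finset.range (m+1), ∑ k ∈ Finset.range (n+1), F i k
      = ∑ q ∈ (Finset.range (m+1) ×ˢ Finset.range (n+1)), F q.1 q.2 := by
    rw [Finset.sum_product]
  have h4 : ∑ q ∈ (Finset.range (m+1) ×ˢ Finset.range (n+1)), F q.1 q.2
      = ∑ q ∈ T, F q.1 q.2 := by
    apply Finset.sum_subset
    · rintro ⟨i, k⟩ hq
      simp only [Finset.mem_product, Finset.mem_range] at hq
      simp only [hT, Finset.mem_filter, Finset.mem_product, Finset.mem_range]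
      omega
    · rintro ⟨i, k⟩ hq hq2
      simp only [hT, Finset.mem_filter, Finset.mem_product, Finset.mem_range] at hq
      simp only [Finset.mem_product, Finset.mem_range] at hq2
      have : m < i ∨ n < k := by omega
      rcases this with h | h
      · simp [hF, hDm i h]
      · simp [hF, hDn k h]
  rw [Finset.sum_congr rfl hstep1, h2, ← h4, ← h3]

lemma triangle_swap (N : ℕ) (f : ℕ → ℕ → ℂ) :
    ∑ p ∈ Finset.range (N+1), ∑ l ∈ Finset.range (p+1), f p l
      = ∑ l ∈ Finset.range (N+1), ∑ p ∈ Finset.Icc l N, f p l := by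
  rw [Finset.sum_sigma', Finset.sum_sigma']
  apply Finset.sum_nbij' (i := fun x => (⟨x.2, x.1⟩ : (_ : ℕ) × ℕ))
    (j := fun x => (⟨x.2, x.1⟩ : (_ : ℕ) × ℕ))
  · rintro ⟨p, l⟩ hx
    simp only [Finset.mem_sigma, Finset.mem_range, Finset.mem_Icc] at hx ⊢
    omega
  · rintro ⟨l, p⟩ hx
    simp only [Finset.mem_sigma, Finset.mem_range, Finset.mem_Icc] at hx ⊢
    omega
  · rintro ⟨p, l⟩ _; rfl
  · rintro ⟨l, p⟩ _; rfl
  · rintro ⟨p, l⟩ _; rfl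

lemma indep_coeffs (P : ℕ → Polynomial ℂ) (hP : ∀ k, (P k).degree = (k : WithBot ℕ))
    (e : ℕ → ℂ) :
    ∀ N, (∑ l ∈ Finset.range N, Polynomial.C (e l) * P l) = 0 → ∀ l < N, e l = 0 := by
  intro N
  induction N with
  | zero => intro _ l hl; omega
  | succ N ih =>
    intro hsum l hl
    have hnd : ∀ k, (P k).natDegree = k := fun k =>
      Polynomial.natDegree_eq_of_degree_eq_some (hP k)
    have htop : e N = 0 := by
      have hc := congrArg (fun q => Polynomial.coeff q N) hsum
      simp only [Polynomial.finset_sum_coeff, Polynomial.coeff_zero, Polynomial.coeff_C_mul]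
        at hc
      rw [Finset.sum_range_succ] at hc
      have hzero : ∀ i ∈ Finset.range N, e i * (P i).coeff N = 0 := by
        intro i hi
        rw [Polynomial.coeff_eq_zero_of_natDegree_lt (by rw [hnd]; exact Finset.mem_range.mp hi)]
        ring
      rw [Finset.sum_eq_zero hzero, zero_add] at hc
      have hlead : (P N).coeff N ≠ 0 := by
        rw [← hnd N]
        exact Polynomial.coeff_ne_zero_of_eq_degree (by rw [hP, hnd])
      exact (mul_eq_zero.mp hc).resolve_right hlead
    rcases Nat.lt_succ_iff_lt_or_eq.mp hl with h | h
    · apply ih _ _ h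
      rw [Finset.sum_range_succ, htop] at hsum
      simpa using hsum
    · rw [h]; exact htop

lemma vanish_real (Q : Polynomial ℂ) (h : ∀ y : ℝ, Q.eval (y : ℂ) = 0) : Q = 0 := by
  apply Polynomial.eq_zero_of_infinite_isRoot
  apply Set.Infinite.mono (s := Set.range (fun y : ℝ => (y : ℂ)))
  · rintro z ⟨y, rfl⟩; exact h y
  · exact Set.infinite_range_of_injective Complex.ofReal_injective

/-- **Theorem (first form of the convolution coefficients).**
Let `P k` be a polynomial sequence with `deg P k = k`, `a` a real constant, `b N k` the
connection coefficients of `(x+a)^N` in the basis `P k`, and `ρ j` the coefficients of the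
expansion of `∫_{-a}^{x+a} P_m(x-t) P_n(t) dt` in the basis `P j (x+a)`.  Then for
`0 ≤ j ≤ m+n+1`,
`ρ j = ∑_{p=j}^{m+n+1} (b_{p,j}/p!) ∑_{ν=1}^{p} (d^{p-ν}P_m/dx^{p-ν})(-a) ·
  (d^{ν-1}P_n/dx^{ν-1})(-a)` (inner sum empty when `p = 0`). -/
theorem stmt3
    (P : ℕ → Polynomial ℂ) (hP : ∀ k, (P k).degree = (k : WithBot ℕ))
    (a : ℝ)
    (b : ℕ → ℕ → ℂ)
    (hb : ∀ N, (Polynomial.X + Polynomial.C (a : ℂ)) ^ N =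
      ∑ k ∈ Finset.range (N + 1), Polynomial.C (b N k) * P k)
    (m n : ℕ) (ρ : ℕ → ℂ)
    (hρ : ∀ x : ℝ,
      (∫ t in (-a)..(x + a), (P m).eval ((x : ℂ) - (t : ℂ)) * (P n).eval (t : ℂ)) =
        ∑ j ∈ Finset.range (m + n + 2), ρ j * (P j).eval ((x : ℂ) + (a : ℂ)))
    (j : ℕ) (hj : j ≤ m + n + 1) :
    ρ j = ∑ p ∈ Finset.Icc j (m + n + 1),
      b p j / (p.factorial : ℂ) *
        ∑ ν ∈ Finset.Icc 1 p,
          (Polynomial.derivative^[p - ν] (P m)).eval (-(a : ℂ)) *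
            (Polynomial.derivative^[ν - 1] (P n)).eval (-(a : ℂ)) := by
  have hnd : ∀ k, (P k).natDegree = k := fun k =>
    Polynomial.natDegree_eq_of_degree_eq_some (hP k)
  have hDm0 : ∀ i, m < i → (Polynomial.derivative^[i] (P m)).eval (-(a:ℂ)) = 0 := by
    intro i hi
    rw [Polynomial.iterate_derivative_eq_zero (by rw [hnd]; omega)]
    simp
  have hDn0 : ∀ k, n < k → (Polynomial.derivative^[k] (P n)).eval (-(a:ℂ)) = 0 := by
    intro k hk
    rw [Polynomial.iterate_derivative_eq_zero (by rw [hnd]; omega)]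
    simp
  set S : ℕ → ℂ := fun p => ∑ ν ∈ Finset.Icc 1 p,
    (Polynomial.derivative^[p - ν] (P m)).eval (-(a:ℂ)) *
      (Polynomial.derivative^[ν - 1] (P n)).eval (-(a:ℂ)) with hS
  set ρ' : ℕ → ℂ := fun l => ∑ p ∈ Finset.Icc l (m+n+1),
    b p l / (p.factorial : ℂ) * S p with hρ'def
  show ρ j = ρ' j
  have main : ∀ x : ℝ, ∑ l ∈ Finset.range (m+n+2), ρ l * (P l).eval ((x:ℂ)+a)
      = ∑ l ∈ Finset.range (m+n+2), ρ' l * (P l).eval ((x:ℂ)+a) := by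
    intro x
    rw [← hρ x, conv_key (P m) (P n) m n (le_of_eq (hnd m)) (le_of_eq (hnd n)) a x]
    have hre := reindex m n
      (fun i => (Polynomial.derivative^[i] (P m)).eval (-(a:ℂ)))
      (fun k => (Polynomial.derivative^[k] (P n)).eval (-(a:ℂ)))
      hDm0 hDn0 ((x:ℂ)+2*a)
    rw [hre]
    have hexp : ∀ p ∈ Finset.range (m+n+2),
        (1/(p.factorial : ℂ)) * S p * ((x:ℂ)+2*a)^p
          = ∑ l ∈ Finset.range (p+1), b p l / (p.factorial : ℂ) * S p * (P l).eval ((x:ℂ)+a) := by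
      intro p _
      have h5 := congrArg (Polynomial.eval ((x:ℂ)+a)) (hb p)
      simp only [Polynomial.eval_pow, Polynomial.eval_add, Polynomial.eval_X, Polynomial.eval_C,
        Polynomial.eval_finset_sum, Polynomial.eval_mul] at h5
      rw [show ((x:ℂ)+2*a) = ((x:ℂ)+a+a) by ring, h5, Finset.mul_sum]
      apply Finset.sum_congr rfl
      intro l _
      ring
    rw [Finset.sum_congr rfl hexp, triangle_swap (m+n+1)
      (fun p l => b p l / (p.factorial : ℂ) * S p * (P l).eval ((x:ℂ)+a))]
    apply Finset.sum_congr rfl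
    intro l _
    rw [hρ'def]
    simp only []
    rw [Finset.sum_mul]
  have hzero : ∀ y : ℝ,
      (∑ l ∈ Finset.range (m+n+2), Polynomial.C (ρ l - ρ' l) * P l).eval ((y:ℝ):ℂ) = 0 := by
    intro y
    have h6 := main (y - a)
    have h7 : (((y - a : ℝ)):ℂ) + a = ((y:ℝ):ℂ) := by push_cast; ring
    rw [h7] at h6
    rw [Polynomial.eval_finset_sum]
    simp only [Polynomial.eval_mul, Polynomial.eval_C, sub_mul]
    rw [Finset.sum_sub_distrib, h6, sub_self]
  have hQ := vanish_real _ hzero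
  have h8 := indep_coeffs P hP (fun l => ρ l - ρ' l) (m+n+2) hQ j (by omega)
  exact sub_eq_zero.mp h8
end

section
/- For nonnegative integers m, n and any j with m+1 ≤ j ≤ m+n+1, the convolution coefficients are given by ρ_{j,n}^m = Σ_{ν=max(1, j−n)}^{m+1} γ_{n−j+ν,0}^{(j−ν, j)} · (d^{ν−1} P_m/dx^{ν−1})(−a). -/
open Polynomial





noncomputable def Fint (q : Polynomial ℂ) : Polynomial ℂ :=
  q.sum fun r c => C (c / (r + 1)) * X ^ (r + 1)

lemma derivative_Fint (q : Polynomial ℂ) : derivative (Fint q) = q := by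
  rw [Fint, Polynomial.sum, map_sum]
  conv_rhs => rw [← Polynomial.sum_C_mul_X_pow_eq q]
  rw [Polynomial.sum]
  refine Finset.sum_congr rfl fun r _ => ?_
  rw [derivative_C_mul_X_pow]
  rw [Nat.add_sub_cancel]
  congr 1
  push_cast
  rw [div_mul_cancel₀]
  exact Nat.cast_add_one_ne_zero r

lemma ftc (q : Polynomial ℂ) (u v : ℝ) :
    (∫ t in u..v, q.eval (t : ℂ)) = (Fint q).eval (v : ℂ) - (Fint q).eval (u : ℂ) := by
  apply intervalIntegral.integral_eq_sub_of_hasDerivAt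
  · intro t _
    have h := (Fint q).hasDerivAt (t : ℂ)
    rw [derivative_Fint] at h
    exact h.comp_ofReal
  · exact ((q.continuous).comp Complex.continuous_ofReal).intervalIntegrable _ _

lemma strip (c : ℂ) (A B : Polynomial ℂ) (h : A.comp (X + C c) = B.comp (X + C c)) :
    A = B := by
  have h2 := congrArg (fun p => p.comp (X - C c)) h
  simpa [comp_assoc, add_comp, X_comp, C_comp, sub_add_cancel] using h2

lemma deg_iter (ℓ : ℕ) : ∀ (p : Polynomial ℂ) (c : ℕ), p.degree = ((c + ℓ : ℕ) : WithBot ℕ) →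
    (derivative^[ℓ] p).degree = (c : WithBot ℕ) := by
  induction ℓ with
  | zero => intro p c h; simpa using h
  | succ ℓ ih =>
    intro p c h
    rw [Function.iterate_succ_apply]
    apply ih
    have hnd : p.natDegree = c + (ℓ + 1) := natDegree_eq_of_degree_eq_some h
    have : 0 < p.natDegree := by omega
    rw [degree_derivative_eq p this, hnd]
    norm_num

lemma extract (B : ℕ → Polynomial ℂ) (hB : ∀ k, (B k).degree = (k : WithBot ℕ)) :
    ∀ (K : ℕ) (f : ℕ → ℂ), (∑ k ∈ Finset.range K, C (f k) * B k) = 0 → ∀ k < K, f k = 0 := by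
  intro K
  induction K with
  | zero => intro f h k hk; omega
  | succ K ih =>
    intro f h k hk
    have hK : f K = 0 := by
      have hc := congrArg (fun p => p.coeff K) h
      simp only [Polynomial.finset_sum_coeff, coeff_zero] at hc
      rw [Finset.sum_range_succ] at hc
      have hzero : ∀ i ∈ Finset.range K, (C (f i) * B i).coeff K = 0 := by
        intro i hi
        rw [coeff_C_mul]
        rw [Polynomial.coeff_eq_zero_of_degree_lt, mul_zero]
        rw [hB i]
        exact_mod_cast Finset.mem_range.mp hi
      rw [Finset.sum_eq_zero hzero, zero_add, coeff_C_mul] at hc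
      have hlc : (B K).coeff K ≠ 0 := by
        have hdeg := hB K
        have hnd : (B K).natDegree = K := natDegree_eq_of_degree_eq_some hdeg
        have hne : B K ≠ 0 := by
          intro hBz; rw [hBz] at hdeg; simp at hdeg
        have := Polynomial.leadingCoeff_ne_zero.mpr hne
        rwa [Polynomial.leadingCoeff, hnd] at this
      exact (mul_eq_zero.mp hc).resolve_right hlc
    rcases Nat.lt_succ_iff_lt_or_eq.mp hk with h' | h'
    · apply ih f _ k h'
      rw [Finset.sum_range_succ, hK] at h
      simpa using h
    · rw [h']; exact hK


noncomputable def Gp (Pn : Polynomial ℂ) (r : ℕ) : Polynomial ℂ := Fint (X ^ r * Pn)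

noncomputable def Hp (Pn : Polynomial ℂ) (a : ℝ) (r : ℕ) : Polynomial ℂ :=
  (Gp Pn r).comp (X + C (a : ℂ)) - C ((Gp Pn r).eval (-(a : ℂ)))

noncomputable def Rpow (Pn : Polynomial ℂ) (a : ℝ) (i : ℕ) : Polynomial ℂ :=
  ∑ l ∈ Finset.range (i + 1), C ((i.choose l : ℂ) * (-1) ^ (i - l)) * X ^ l * Hp Pn a (i - l)

noncomputable def Rp (Pn : Polynomial ℂ) (a : ℝ) (m : ℕ) (p : Polynomial ℂ) : Polynomial ℂ :=
  ∑ i ∈ Finset.range (m + 1), C (p.coeff i) * Rpow Pn a i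

lemma derivative_Hp (Pn : Polynomial ℂ) (a : ℝ) (r : ℕ) :
    derivative (Hp Pn a r) = (X + C (a : ℂ)) ^ r * Pn.comp (X + C (a : ℂ)) := by
  unfold Hp Gp
  rw [map_sub, derivative_C, sub_zero, derivative_comp, derivative_Fint, mul_comp, X_pow_comp]
  simp [mul_comm]

lemma derivative_Rpow_zero (Pn : Polynomial ℂ) (a : ℝ) :
    derivative (Rpow Pn a 0) = Pn.comp (X + C (a : ℂ)) := by
  unfold Rpow
  simp [derivative_Hp]

lemma binom_key (a : ℝ) (i : ℕ) :
    ∑ l ∈ Finset.range (i + 1), C ((i.choose l : ℂ) * (-1) ^ (i - l)) * X ^ l *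
      (X + C (a : ℂ)) ^ (i - l) = C ((-(a : ℂ)) ^ i) := by
  have h := add_pow X (-(X + C (a : ℂ))) i
  have hx : X + -(X + C (a : ℂ)) = -C (a : ℂ) := by ring
  rw [hx] at h
  have : (-C (a : ℂ)) ^ i = C ((-(a : ℂ)) ^ i) := by
    rw [map_pow, map_neg]
  rw [this] at h
  rw [h]
  refine Finset.sum_congr rfl fun l _ => ?_
  rw [neg_pow (X + C (a : ℂ)), map_mul, map_pow, map_neg, map_one, C_eq_natCast]
  ring

lemma derivative_Rpow_succ (Pn : Polynomial ℂ) (a : ℝ) (i : ℕ) :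
    derivative (Rpow Pn a (i + 1)) =
      C ((-(a : ℂ)) ^ (i + 1)) * Pn.comp (X + C (a : ℂ)) +
        C (((i : ℂ) + 1)) * Rpow Pn a i := by
  unfold Rpow
  rw [map_sum]
  have hterm : ∀ l ∈ Finset.range (i + 2),
      derivative (C (((i+1).choose l : ℂ) * (-1) ^ (i + 1 - l)) * X ^ l * Hp Pn a (i + 1 - l)) =
        C (((i+1).choose l : ℂ) * (-1) ^ (i + 1 - l) * l) * X ^ (l - 1) * Hp Pn a (i + 1 - l) +
        C (((i+1).choose l : ℂ) * (-1) ^ (i + 1 - l)) * X ^ l *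
          ((X + C (a : ℂ)) ^ (i + 1 - l) * Pn.comp (X + C (a : ℂ))) := by
    intro l _
    rw [derivative_mul, derivative_C_mul_X_pow, derivative_Hp]
  rw [Finset.sum_congr rfl hterm, Finset.sum_add_distrib, add_comm]
  congr 1
  · -- S2 = C((-a)^(i+1)) * Pn.comp
    have : ∀ l ∈ Finset.range (i + 2),
        C (((i+1).choose l : ℂ) * (-1) ^ (i + 1 - l)) * X ^ l *
          ((X + C (a : ℂ)) ^ (i + 1 - l) * Pn.comp (X + C (a : ℂ))) =
        (C (((i+1).choose l : ℂ) * (-1) ^ (i + 1 - l)) * X ^ l * (X + C (a : ℂ)) ^ (i + 1 - l)) *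
          Pn.comp (X + C (a : ℂ)) := by intro l _; ring
    rw [Finset.sum_congr rfl this, ← Finset.sum_mul, binom_key a (i+1)]
  · -- S1 = C (i+1) * Rpow i
    rw [Finset.sum_range_succ']
    simp only [Nat.cast_zero, mul_zero, map_zero, zero_mul, add_zero]
    rw [Finset.mul_sum]
    refine Finset.sum_congr rfl fun l hl => ?_
    have h1 : i + 1 - (l + 1) = i - l := by omega
    have h2 : ((i+1).choose (l+1) : ℂ) * ((l : ℂ) + 1) = ((i : ℂ) + 1) * (i.choose l : ℂ) := by
      have := Nat.add_one_mul_choose_eq i l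
      have h3 : ((i + 1) * i.choose l : ℂ) = ((i+1).choose (l+1) * (l+1) : ℕ) := by
        exact_mod_cast congrArg (fun n : ℕ => (n : ℂ)) this
      push_cast at h3 ⊢
      linear_combination h3.symm
    rw [h1]
    simp only [Nat.add_sub_cancel, Nat.cast_add, Nat.cast_one]
    have h4 : (((i+1).choose (l+1) : ℂ) * (-1:ℂ)^(i-l) * ((l:ℂ)+1))
        = ((i:ℂ)+1) * ((i.choose l : ℂ) * (-1:ℂ)^(i-l)) := by
      linear_combination ((-1:ℂ)^(i-l)) * h2
    rw [h4, map_mul, map_mul]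
    ring

lemma derivative_Rpow (Pn : Polynomial ℂ) (a : ℝ) (i : ℕ) :
    derivative (Rpow Pn a i) =
      C ((-(a : ℂ)) ^ i) * Pn.comp (X + C (a : ℂ)) + C (i : ℂ) * Rpow Pn a (i - 1) := by
  cases i with
  | zero => simp [derivative_Rpow_zero]
  | succ i => rw [derivative_Rpow_succ]; push_cast; ring_nf

lemma derivative_Rp (Pn : Polynomial ℂ) (a : ℝ) (m : ℕ) (p : Polynomial ℂ)
    (hp : p.natDegree ≤ m) :
    derivative (Rp Pn a m p) =
      C (p.eval (-(a : ℂ))) * Pn.comp (X + C (a : ℂ)) + Rp Pn a m (derivative p) := by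
  unfold Rp
  rw [map_sum]
  have hterm : ∀ i ∈ Finset.range (m + 1),
      derivative (C (p.coeff i) * Rpow Pn a i) =
        C (p.coeff i * (-(a : ℂ)) ^ i) * Pn.comp (X + C (a : ℂ)) +
          C (p.coeff i * i) * Rpow Pn a (i - 1) := by
    intro i _
    rw [derivative_mul, derivative_C, zero_mul, zero_add, derivative_Rpow]
    rw [mul_add, ← mul_assoc, ← map_mul, ← mul_assoc, ← map_mul]
  rw [Finset.sum_congr rfl hterm, Finset.sum_add_distrib]
  refine congrArg₂ (· + ·) ?_ ?_
  · rw [← Finset.sum_mul]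
    congr 1
    rw [← map_sum]
    congr 1
    exact (Polynomial.eval_eq_sum_range' (Nat.lt_succ_of_le hp) _).symm
  · rw [Finset.sum_range_succ']
    simp only [Nat.cast_zero, mul_zero, map_zero, zero_mul, add_zero]
    rw [Finset.sum_range_succ]
    have hlast : (derivative p).coeff m = 0 := by
      rw [coeff_derivative]
      rw [Polynomial.coeff_eq_zero_of_natDegree_lt (Nat.lt_succ_of_le hp)]
      ring
    rw [hlast, map_zero, zero_mul, add_zero]
    refine Finset.sum_congr rfl fun k _ => ?_
    rw [coeff_derivative]
    push_cast
    simp [Nat.add_sub_cancel]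

lemma iter_deriv_Rp (Pn : Polynomial ℂ) (a : ℝ) (m : ℕ) (p : Polynomial ℂ)
    (hp : p.natDegree ≤ m) (ℓ : ℕ) :
    derivative^[ℓ] (Rp Pn a m p) =
      (∑ ν ∈ Finset.Icc 1 ℓ, C ((derivative^[ν - 1] p).eval (-(a : ℂ))) *
        (derivative^[ℓ - ν] Pn).comp (X + C (a : ℂ))) + Rp Pn a m (derivative^[ℓ] p) := by
  induction ℓ with
  | zero => simp
  | succ ℓ ih =>
    rw [Function.iterate_succ_apply', ih, map_add, map_sum]
    have hterm : ∀ ν ∈ Finset.Icc 1 ℓ,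
        derivative (C ((derivative^[ν - 1] p).eval (-(a : ℂ))) *
          (derivative^[ℓ - ν] Pn).comp (X + C (a : ℂ))) =
        C ((derivative^[ν - 1] p).eval (-(a : ℂ))) *
          (derivative^[ℓ + 1 - ν] Pn).comp (X + C (a : ℂ)) := by
      intro ν hν
      obtain ⟨h1, h2⟩ := Finset.mem_Icc.mp hν
      rw [derivative_mul, derivative_C, zero_mul, zero_add, derivative_comp]
      have : ℓ + 1 - ν = (ℓ - ν) + 1 := by omega
      rw [this, Function.iterate_succ_apply']
      simp
    rw [Finset.sum_congr rfl hterm]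
    have hd : (derivative^[ℓ] p).natDegree ≤ m :=
      le_trans (Polynomial.natDegree_iterate_derivative p ℓ |>.trans (Nat.sub_le _ _)) hp
    rw [derivative_Rp Pn a m _ hd]
    rw [Finset.sum_Icc_succ_top (Nat.le_add_left 1 ℓ)]
    have : ℓ + 1 - (ℓ + 1) = 0 := by omega
    rw [this, Function.iterate_zero_apply, Nat.add_sub_cancel,
      show (⇑derivative)^[ℓ + 1] p = derivative ((⇑derivative)^[ℓ] p) from
        Function.iterate_succ_apply' _ _ _]
    ring

lemma cont_eval (q : Polynomial ℂ) : Continuous fun t : ℝ => q.eval (t : ℂ) :=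
  (q.continuous).comp Complex.continuous_ofReal

lemma integral_eq_Rp (Pn : Polynomial ℂ) (a : ℝ) (m : ℕ) (p : Polynomial ℂ)
    (hp : p.natDegree ≤ m) (x : ℝ) :
    (∫ t in (-a)..(x + a), p.eval ((x : ℂ) - (t : ℂ)) * Pn.eval (t : ℂ)) =
      (Rp Pn a m p).eval (x : ℂ) := by
  have hint : ∀ t : ℝ, p.eval ((x : ℂ) - (t : ℂ)) * Pn.eval (t : ℂ) =
      ∑ i ∈ Finset.range (m + 1), ∑ l ∈ Finset.range (i + 1),
        (p.coeff i * (i.choose l : ℂ) * (-1) ^ (i - l) * (x : ℂ) ^ l) *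
          ((X ^ (i - l) * Pn).eval (t : ℂ)) := by
    intro t
    rw [Polynomial.eval_eq_sum_range' (Nat.lt_succ_of_le hp), Finset.sum_mul]
    refine Finset.sum_congr rfl fun i _ => ?_
    rw [sub_eq_add_neg, add_pow, Finset.mul_sum, Finset.sum_mul]
    refine Finset.sum_congr rfl fun l _ => ?_
    rw [neg_pow]
    simp only [eval_mul, eval_pow, eval_X]
    ring
  rw [intervalIntegral.integral_congr (fun t _ => hint t)]
  rw [intervalIntegral.integral_finset_sum]
  swap
  · intro i _
    apply Continuous.intervalIntegrable
    exact continuous_finset_sum _ fun l _ => continuous_const.mul (cont_eval _)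
  have hsum2 : ∀ i ∈ Finset.range (m + 1),
      (∫ t in (-a)..(x + a), ∑ l ∈ Finset.range (i + 1),
        (p.coeff i * (i.choose l : ℂ) * (-1) ^ (i - l) * (x : ℂ) ^ l) *
          ((X ^ (i - l) * Pn).eval (t : ℂ))) =
      ∑ l ∈ Finset.range (i + 1),
        (p.coeff i * (i.choose l : ℂ) * (-1) ^ (i - l) * (x : ℂ) ^ l) *
          ((Gp Pn (i - l)).eval ((x : ℂ) + (a : ℂ)) - (Gp Pn (i - l)).eval (-(a : ℂ))) := by
    intro i _
    rw [intervalIntegral.integral_finset_sum]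
    swap
    · intro l _
      exact (continuous_const.mul (cont_eval _)).intervalIntegrable _ _
    refine Finset.sum_congr rfl fun l _ => ?_
    rw [intervalIntegral.integral_const_mul, ftc]
    unfold Gp
    push_cast
    ring
  rw [Finset.sum_congr rfl hsum2]
  -- now evaluate RHS
  unfold Rp Rpow Hp
  rw [eval_finset_sum]
  refine Finset.sum_congr rfl fun i _ => ?_
  rw [eval_mul, eval_finset_sum, Finset.mul_sum]
  refine Finset.sum_congr rfl fun l _ => ?_
  simp only [eval_mul, eval_sub, eval_comp, eval_add, eval_X, eval_C, eval_pow]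
  ring

lemma iter_deriv_comp (e : ℂ) (d : ℕ) (q : Polynomial ℂ) :
    derivative^[d] (q.comp (X + C e)) = (derivative^[d] q).comp (X + C e) := by
  induction d generalizing q with
  | zero => simp
  | succ d ih =>
    rw [Function.iterate_succ_apply, Function.iterate_succ_apply, derivative_comp]
    simp only [derivative_add, derivative_X, derivative_C, add_zero, one_mul]
    exact ih _

lemma sum_C_mul_comp (q : Polynomial ℂ) (T : Finset ℕ) (f : ℕ → ℂ) (g : ℕ → Polynomial ℂ) :
    (∑ i ∈ T, C (f i) * g i).comp q = ∑ i ∈ T, C (f i) * (g i).comp q := by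
  rw [Polynomial.comp, Polynomial.eval₂_finset_sum]
  exact Finset.sum_congr rfl fun i _ => by rw [← Polynomial.comp, mul_comp, C_comp]


/-- **Theorem (convolution coefficients for `j ≥ m+1`).**
Let `P k` be a polynomial sequence with `deg P k = k`, `a` a real constant,
`γ r s (N-r) k` the connection coefficients of `d^r P_N/dx^r` in the basis
`d^s P_{k+s}/dx^s`, and `ρ j` the coefficients of the expansion of
`∫_{-a}^{x+a} P_m(x-t) P_n(t) dt` in the basis `P j (x+a)`.  Then for
`m+1 ≤ j ≤ m+n+1`,
`ρ j = ∑_{ν=max(1, j-n)}^{m+1} γ_{n-j+ν,0}^{(j-ν,j)} · (d^{ν-1}P_m/dx^{ν-1})(-a)`. -/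
theorem stmt4
    (P : ℕ → Polynomial ℂ) (hP : ∀ k, (P k).degree = (k : WithBot ℕ))
    (a : ℝ)
    (γ : ℕ → ℕ → ℕ → ℕ → ℂ)
    (hγ : ∀ r s N, r ≤ N → Polynomial.derivative^[r] (P N) =
      ∑ k ∈ Finset.range (N - r + 1),
        Polynomial.C (γ r s (N - r) k) * Polynomial.derivative^[s] (P (k + s)))
    (m n : ℕ) (ρ : ℕ → ℂ)
    (hρ : ∀ x : ℝ,
      (∫ t in (-a)..(x + a), (P m).eval ((x : ℂ) - (t : ℂ)) * (P n).eval (t : ℂ)) =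
        ∑ j ∈ Finset.range (m + n + 2), ρ j * (P j).eval ((x : ℂ) + (a : ℂ)))
    (j : ℕ) (hj1 : m + 1 ≤ j) (hj2 : j ≤ m + n + 1) :
    ρ j = ∑ ν ∈ Finset.Icc (max 1 (j - n)) (m + 1),
      γ (j - ν) j (n + ν - j) 0 *
        (Polynomial.derivative^[ν - 1] (P m)).eval (-(a : ℂ)) := by
  have hnd : ∀ k, (P k).natDegree = k := fun k => natDegree_eq_of_degree_eq_some (hP k)
  set s : Polynomial ℂ := X + C (a : ℂ) with hs
  set e : ℕ → ℂ := fun ν => (derivative^[ν - 1] (P m)).eval (-(a : ℂ)) with he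
  set M := max 1 (j - n) with hM
  set K := m + n + 2 - j with hK
  set D : ℕ → Polynomial ℂ := fun k => derivative^[j] (P (k + j)) with hD
  -- Step 1: polynomial identity from the integral
  have hSS : (∑ i ∈ Finset.range (m + n + 2), C (ρ i) * (P i).comp s) = Rp (P n) a m (P m) := by
    apply Polynomial.eq_of_infinite_eval_eq
    apply Set.Infinite.mono (s := Set.range (fun x : ℝ => (x : ℂ)))
    · rintro _ ⟨x, rfl⟩
      have h1 : Polynomial.eval (x : ℂ) (∑ i ∈ Finset.range (m + n + 2), C (ρ i) * (P i).comp s)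
          = ∑ i ∈ Finset.range (m + n + 2), ρ i * (P i).eval ((x : ℂ) + (a : ℂ)) := by
        rw [eval_finset_sum]
        refine Finset.sum_congr rfl fun i _ => ?_
        rw [eval_mul, eval_C, eval_comp, hs]
        simp
      show Polynomial.eval _ _ = _
      rw [h1, ← hρ x, integral_eq_Rp (P n) a m (P m) (hnd m).le x]
    · exact Set.infinite_range_of_injective Complex.ofReal_injective
  -- Step 2: differentiate j times
  have hz : derivative^[j] (P m) = 0 :=
    Polynomial.iterate_derivative_eq_zero (by rw [hnd m]; omega)
  have hRp0 : Rp (P n) a m (0 : Polynomial ℂ) = 0 := by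
    unfold Rp; simp
  have E1 : (∑ k ∈ Finset.range (m + n + 2), C (ρ k) * (derivative^[j] (P k)).comp s)
      = ∑ ν ∈ Finset.Icc 1 j, C (e ν) * (derivative^[j - ν] (P n)).comp s := by
    have h2 := congrArg (fun p => derivative^[j] p) hSS
    rw [Polynomial.iterate_derivative_sum] at h2
    have h3 : ∀ i ∈ Finset.range (m + n + 2),
        derivative^[j] (C (ρ i) * (P i).comp s) = C (ρ i) * (derivative^[j] (P i)).comp s := by
      intro i _
      rw [Polynomial.iterate_derivative_C_mul, hs, iter_deriv_comp]
    rw [Finset.sum_congr rfl h3, iter_deriv_Rp (P n) a m (P m) (hnd m).le j, hz, hRp0,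
      add_zero] at h2
    exact h2
  -- Step 3: restrict the ν-sum to Icc 1 (m+1)
  have E1' : (∑ ν ∈ Finset.Icc 1 j, C (e ν) * (derivative^[j - ν] (P n)).comp s)
      = ∑ ν ∈ Finset.Icc 1 (m + 1), C (e ν) * (derivative^[j - ν] (P n)).comp s := by
    symm
    apply Finset.sum_subset
    · intro ν hν
      rw [Finset.mem_Icc] at *
      omega
    · intro ν hν hν'
      rw [Finset.mem_Icc] at hν hν'
      have : derivative^[ν - 1] (P m) = 0 :=
        Polynomial.iterate_derivative_eq_zero (by rw [hnd m]; omega)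
      simp [he, this]
  -- Step 4: strip the composition
  have E2 : (∑ k ∈ Finset.range (m + n + 2), C (ρ k) * derivative^[j] (P k))
      = ∑ ν ∈ Finset.Icc 1 (m + 1), C (e ν) * derivative^[j - ν] (P n) := by
    apply strip (a : ℂ)
    rw [sum_C_mul_comp, sum_C_mul_comp, ← hs]
    rw [E1, E1']
  -- Step 5: reindex the LHS
  have hL : (∑ k ∈ Finset.range (m + n + 2), C (ρ k) * derivative^[j] (P k))
      = ∑ k ∈ Finset.range K, C (ρ (k + j)) * D k := by
    rw [Finset.range_eq_Ico, ← Finset.sum_Ico_consecutive _ (Nat.zero_le j) (by omega)]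
    have h0 : ∑ k ∈ Finset.Ico 0 j, C (ρ k) * derivative^[j] (P k) = 0 := by
      apply Finset.sum_eq_zero
      intro k hk
      have : derivative^[j] (P k) = 0 :=
        Polynomial.iterate_derivative_eq_zero (by rw [hnd k]; exact (Finset.mem_Ico.mp hk).2)
      simp [this]
    rw [h0, zero_add, Finset.sum_Ico_eq_sum_range]
    refine Finset.sum_congr (by rw [Finset.range_eq_Ico]) fun k _ => ?_
    rw [hD, Nat.add_comm j k]
  -- Step 6: expand the RHS via the connection coefficients
  have hR : (∑ ν ∈ Finset.Icc 1 (m + 1), C (e ν) * derivative^[j - ν] (P n))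
      = ∑ k ∈ Finset.range K, C (∑ ν ∈ Finset.Icc M (m + 1),
          (if k ≤ n + ν - j then γ (j - ν) j (n + ν - j) k else 0) * e ν) * D k := by
    have hstep1 : (∑ ν ∈ Finset.Icc 1 (m + 1), C (e ν) * derivative^[j - ν] (P n))
        = ∑ ν ∈ Finset.Icc M (m + 1), C (e ν) * derivative^[j - ν] (P n) := by
      symm
      apply Finset.sum_subset
      · intro ν hν
        rw [Finset.mem_Icc] at *
        omega
      · intro ν hν hν'
        rw [Finset.mem_Icc] at hν hν'
        have hjν : n < j - ν := by omega
        have : derivative^[j - ν] (P n) = 0 :=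
          Polynomial.iterate_derivative_eq_zero (by rw [hnd n]; omega)
        simp [this]
    rw [hstep1]
    have hkey : ∀ ν ∈ Finset.Icc M (m + 1),
        C (e ν) * derivative^[j - ν] (P n) =
          ∑ k ∈ Finset.range K,
            C ((if k ≤ n + ν - j then γ (j - ν) j (n + ν - j) k else 0) * e ν) * D k := by
      intro ν hν
      rw [Finset.mem_Icc] at hν
      have hrν : j - ν ≤ n := by omega
      rw [hγ (j - ν) j n hrν]
      have hnn : n - (j - ν) = n + ν - j := by omega
      rw [hnn]
      have hsub : Finset.range (n + ν - j + 1) ⊆ Finset.range K := by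
        intro k hk
        rw [Finset.mem_range] at *
        omega
      rw [Finset.mul_sum]
      rw [← Finset.sum_subset hsub (fun k _ hk => ?_)]
      · refine Finset.sum_congr rfl fun k hk => ?_
        rw [Finset.mem_range] at hk
        rw [if_pos (by omega), hD, map_mul]
        ring
      · rw [Finset.mem_range] at hk
        rw [if_neg (by omega), zero_mul, map_zero, zero_mul]
    rw [Finset.sum_congr rfl hkey, Finset.sum_comm]
    refine Finset.sum_congr rfl fun k _ => ?_
    rw [map_sum, Finset.sum_mul]
  -- Step 7: extract the coefficient k = 0
  have hDdeg : ∀ k, (D k).degree = (k : WithBot ℕ) := by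
    intro k
    exact deg_iter j (P (k + j)) k (by rw [hP (k + j)])
  have hKpos : 0 < K := by omega
  set c : ℕ → ℂ := fun k => ∑ ν ∈ Finset.Icc M (m + 1),
      (if k ≤ n + ν - j then γ (j - ν) j (n + ν - j) k else 0) * e ν with hc
  have hfin : (∑ k ∈ Finset.range K, C (ρ (k + j) - c k) * D k) = 0 := by
    have := hL.symm.trans (E2.trans hR)
    rw [← sub_eq_zero] at this
    rw [← this, ← Finset.sum_sub_distrib]
    refine Finset.sum_congr rfl fun k _ => ?_
    rw [map_sub, sub_mul]
  have h0 := extract D hDdeg K _ hfin 0 hKpos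
  have hρj : ρ j = c 0 := by
    have h1 := h0
    rw [zero_add, sub_eq_zero] at h1
    exact h1
  rw [hρj, hc]
  refine Finset.sum_congr rfl fun ν _ => ?_
  rw [if_pos (Nat.zero_le _)]
end

section
/- For nonnegative integers m, n and any j with 0 ≤ j ≤ m, the convolution coefficients are given by ρ_{j,n}^m = Σ_{ν=1}^{j} γ_{m−j+ν,0}^{(j−ν, j)} · (d^{ν−1} P_n/dx^{ν−1})(−a) + Σ_{ν=j+1}^{n+1} (d^{ν−1} P_n/dx^{ν−1})(−a) · Σ_{p=0}^{m} [b_{p+ν,j}/(p+ν)!] · (d^{p} P_m/dx^{p})(−a). -/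
open Polynomial

lemma sum_basis_eq_zero {Q : ℕ → Polynomial ℂ} (hQ1 : ∀ k, (Q k).coeff k ≠ 0)
    (hQ2 : ∀ k l, k < l → (Q k).coeff l = 0) :
    ∀ (K : ℕ) (e : ℕ → ℂ), (∑ k ∈ Finset.range K, C (e k) * Q k) = 0 → ∀ k < K, e k = 0 := by
  intro K
  induction K with
  | zero => simp
  | succ K ih =>
    intro e h k hk
    have hcoeff : ∑ k ∈ Finset.range (K + 1), e k * (Q k).coeff K = 0 := by
      have := congrArg (fun q => Polynomial.coeff q K) h
      simpa [Polynomial.finset_sum_coeff, Polynomial.coeff_C_mul] using this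
    have hsingle : ∑ k ∈ Finset.range (K + 1), e k * (Q k).coeff K = e K * (Q K).coeff K := by
      apply Finset.sum_eq_single_of_mem K (Finset.self_mem_range_succ K)
      intro i hi hne
      have hlt : i < K := lt_of_le_of_ne (Nat.lt_succ_iff.mp (Finset.mem_range.mp hi)) hne
      rw [hQ2 i K hlt, mul_zero]
    have heK : e K = 0 := by
      rcases mul_eq_zero.mp (hsingle ▸ hcoeff) with h' | h'
      · exact h'
      · exact absurd h' (hQ1 K)
    rcases Nat.lt_succ_iff_lt_or_eq.mp hk with hk' | rfl
    · apply ih e _ k hk'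
      rw [Finset.sum_range_succ, heK] at h
      simpa using h
    · exact heK

lemma poly_ftc (S : Polynomial ℂ) (u v : ℝ) :
    (∫ t in u..v, (derivative S).eval (t : ℂ)) = S.eval (v : ℂ) - S.eval (u : ℂ) := by
  apply intervalIntegral.integral_eq_sub_of_hasDerivAt
  · intro t ht
    exact (S.hasDerivAt (t : ℂ)).comp_ofReal
  · exact ((Polynomial.continuous (derivative S)).comp Complex.continuous_ofReal).intervalIntegrable u v

lemma iter_deriv_sum (r : ℕ) : ∀ (s : Finset ℕ) (f : ℕ → Polynomial ℂ),
    derivative^[r] (∑ k ∈ s, f k) = ∑ k ∈ s, derivative^[r] (f k) := by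
  induction r with
  | zero => simp
  | succ r ih =>
    intro s f
    rw [Function.iterate_succ_apply, derivative_sum, ih]
    apply Finset.sum_congr rfl
    intro k _
    rw [Function.iterate_succ_apply]

/-- **Theorem (convolution coefficients for `0 ≤ j ≤ m`).**
Let `P k` be a polynomial sequence with `deg P k = k`, `a` a real constant, `b N k` the
connection coefficients of `(x+a)^N` in the basis `P k`, `γ r s (N-r) k` the connection
coefficients of `d^r P_N/dx^r` in the basis `d^s P_{k+s}/dx^s`, and `ρ j` the coefficients
of the expansion of `∫_{-a}^{x+a} P_m(x-t) P_n(t) dt` in `P j (x+a)`.  Then for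
`0 ≤ j ≤ m`,
`ρ j = ∑_{ν=1}^{j} γ_{m-j+ν,0}^{(j-ν,j)} (d^{ν-1}P_n/dx^{ν-1})(-a)
   + ∑_{ν=j+1}^{n+1} (d^{ν-1}P_n/dx^{ν-1})(-a) ∑_{p=0}^{m} (b_{p+ν,j}/(p+ν)!)
     (d^{p}P_m/dx^{p})(-a)`. -/
theorem stmt5
    (P : ℕ → Polynomial ℂ) (hP : ∀ k, (P k).degree = (k : WithBot ℕ))
    (a : ℝ)
    (b : ℕ → ℕ → ℂ)
    (hb : ∀ N, (Polynomial.X + Polynomial.C (a : ℂ)) ^ N =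
      ∑ k ∈ Finset.range (N + 1), Polynomial.C (b N k) * P k)
    (γ : ℕ → ℕ → ℕ → ℕ → ℂ)
    (hγ : ∀ r s N, r ≤ N → Polynomial.derivative^[r] (P N) =
      ∑ k ∈ Finset.range (N - r + 1),
        Polynomial.C (γ r s (N - r) k) * Polynomial.derivative^[s] (P (k + s)))
    (m n : ℕ) (ρ : ℕ → ℂ)
    (hρ : ∀ x : ℝ,
      (∫ t in (-a)..(x + a), (P m).eval ((x : ℂ) - (t : ℂ)) * (P n).eval (t : ℂ)) =
        ∑ j ∈ Finset.range (m + n + 2), ρ j * (P j).eval ((x : ℂ) + (a : ℂ)))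
    (j : ℕ) (hj : j ≤ m) :
    ρ j = (∑ ν ∈ Finset.Icc 1 j,
        γ (j - ν) j (m + ν - j) 0 *
          (Polynomial.derivative^[ν - 1] (P n)).eval (-(a : ℂ)))
      + ∑ ν ∈ Finset.Icc (j + 1) (n + 1),
          (Polynomial.derivative^[ν - 1] (P n)).eval (-(a : ℂ)) *
            ∑ p ∈ Finset.range (m + 1),
              b (p + ν) j / ((p + ν).factorial : ℂ) *
                (Polynomial.derivative^[p] (P m)).eval (-(a : ℂ)) := by
  classical
  have hPdeg : ∀ k, (P k).natDegree = k := fun k => natDegree_eq_of_degree_eq_some (hP k)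
  have hPne : ∀ k, P k ≠ 0 := by
    intro k h
    have := hP k
    rw [h, degree_zero] at this
    exact (WithBot.bot_ne_coe) this
  have hPlc : ∀ k, (P k).coeff k ≠ 0 := by
    intro k
    have := leadingCoeff_ne_zero.mpr (hPne k)
    rwa [leadingCoeff, hPdeg k] at this
  have hPcoeff : ∀ k l, k < l → (P k).coeff l = 0 := by
    intro k l hkl
    exact coeff_eq_zero_of_natDegree_lt (by rw [hPdeg]; exact hkl)
  have hfact : ∀ N : ℕ, ((N.factorial : ℂ)) ≠ 0 :=
    fun N => Nat.cast_ne_zero.mpr N.factorial_ne_zero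
  set c : ℕ → ℂ := fun p => (Polynomial.derivative^[p] (P m)).eval (-(a:ℂ)) with hc
  set d : ℕ → ℂ := fun q => (Polynomial.derivative^[q] (P n)).eval (-(a:ℂ)) with hd
  set A : ℕ → Polynomial ℂ := fun ν => ∑ p ∈ Finset.range (m+1),
      C (c p / ((p+ν).factorial : ℂ)) * (X + C (a:ℂ)) ^ (p+ν) with hA
  set B : ℕ → ℕ → ℂ := fun N k => if k ≤ N then b N k else 0 with hB
  set e : ℕ → ℕ → ℂ := fun ν k => ∑ p ∈ Finset.range (m+1),
      B (p+ν) k / ((p+ν).factorial : ℂ) * c p with he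
  -- Taylor: A 0 = P m
  have hA0 : A 0 = P m := by
    have ht := sum_taylor_eq (P m) (-(a:ℂ))
    rw [Polynomial.sum_over_range' _ (by intro n; simp) (m+1)
      (by rw [natDegree_taylor, hPdeg]; omega)] at ht
    rw [hA, ← ht]
    apply Finset.sum_congr rfl
    intro p hp
    have h1 : (taylor (-(a:ℂ)) (P m)).coeff p = c p / (p.factorial : ℂ) := by
      rw [taylor_coeff]
      have h2 : (p.factorial • hasseDeriv p (P m) : Polynomial ℂ) = derivative^[p] (P m) := by
        have := congrFun (Polynomial.factorial_smul_hasseDeriv (R := ℂ) (k := p)) (P m)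
        simpa using this
      have h3 : ((p.factorial : ℂ)) * (hasseDeriv p (P m)).eval (-(a:ℂ)) = c p := by
        rw [hc]
        simp only
        rw [← h2, nsmul_eq_mul]
        simp [Polynomial.eval_mul]
      rw [eq_div_iff (hfact p), ← h3]
      ring
    rw [add_zero, h1]
    congr 1
    rw [sub_eq_add_neg, ← C_neg, neg_neg]
  -- derivative of A
  have hAd : ∀ ν, derivative (A (ν+1)) = A ν := by
    intro ν
    rw [hA]
    simp only
    rw [derivative_sum]
    apply Finset.sum_congr rfl
    intro p hp
    rw [derivative_C_mul, derivative_pow, derivative_X_add_C]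
    have h1 : p + (ν+1) - 1 = p + ν := by omega
    rw [h1, mul_one, ← mul_assoc, ← C_mul]
    congr 1
    rw [div_mul_eq_mul_div]
    congr 1
    rw [div_eq_div_iff (hfact _) (hfact _),
      show p + (ν+1) = (p+ν)+1 from by omega, Nat.factorial_succ]
    push_cast
    ring
  have hAiter : ∀ ν, derivative^[ν] (A ν) = P m := by
    intro ν
    induction ν with
    | zero => simpa using hA0
    | succ ν ih => rw [Function.iterate_succ_apply, hAd ν, ih]
  have hAa : ∀ ν, (A (ν+1)).eval (-(a:ℂ)) = 0 := by
    intro ν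
    rw [hA]
    simp only
    rw [eval_finset_sum]
    apply Finset.sum_eq_zero
    intro p hp
    simp only [eval_mul, eval_pow, eval_add, eval_X, eval_C, neg_add_cancel]
    rw [zero_pow (by omega), mul_zero]
  -- padded expansion of (X + C a)^N
  have hBpoly : ∀ N K : ℕ, N < K → ((X + C (a:ℂ)) ^ N : Polynomial ℂ) =
      ∑ k ∈ Finset.range K, C (B N k) * P k := by
    intro N K hNK
    rw [hb N]
    rw [Finset.sum_congr rfl (g := fun k => C (B N k) * P k)
      (fun k hk => by
        have : k ≤ N := Nat.lt_succ_iff.mp (Finset.mem_range.mp hk)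
        simp [hB, this])]
    apply Finset.sum_subset (Finset.range_subset_range.mpr (by omega))
    intro k hk hk'
    have : ¬ k ≤ N := by simp only [Finset.mem_range] at hk'; omega
    simp [hB, this]
  -- expansion of A ν in the basis P
  have hApoly : ∀ ν, A ν = ∑ k ∈ Finset.range (m+ν+1), C (e ν k) * P k := by
    intro ν
    rw [hA, he]
    simp only
    rw [Finset.sum_congr rfl (fun p hp => by
      rw [hBpoly (p+ν) (m+ν+1) (by have := Finset.mem_range.mp hp; omega)])]
    simp_rw [Finset.mul_sum]
    rw [Finset.sum_comm]
    apply Finset.sum_congr rfl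
    intro k hk
    rw [map_sum (C : ℂ →+* Polynomial ℂ), Finset.sum_mul]
    apply Finset.sum_congr rfl
    intro p hp
    rw [← mul_assoc, ← C_mul]
    congr 2
    ring
  have hez : ∀ ν k, m + ν < k → e ν k = 0 := by
    intro ν k hk
    rw [he]
    apply Finset.sum_eq_zero
    intro p hp
    have hp' : p ≤ m := Nat.lt_succ_iff.mp (Finset.mem_range.mp hp)
    have hnk : ¬ (k ≤ p + ν) := by omega
    simp [hB, hnk]
  -- evaluated expansion, padded to range (m+n+2)
  have hAevalP : ∀ ν, ν ≤ n+1 → ∀ w : ℂ,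
      (A ν).eval w = ∑ k ∈ Finset.range (m+n+2), e ν k * (P k).eval w := by
    intro ν h2 w
    rw [hApoly ν, eval_finset_sum]
    simp only [eval_mul, eval_C]
    apply Finset.sum_subset (Finset.range_subset_range.mpr (by omega))
    intro k hk hk'
    rw [hez ν k (by simp only [Finset.mem_range] at hk'; omega), zero_mul]
  -- the integral, via integration by parts
  have hint : ∀ x : ℝ, (∫ t in (-a)..(x + a), (P m).eval ((x : ℂ) - (t : ℂ)) * (P n).eval (t : ℂ))
      = ∑ i ∈ Finset.range (n+1), d i * (A (i+1)).eval ((x:ℂ) + (a:ℂ)) := by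
    intro x
    set q : Polynomial ℂ := C (x:ℂ) - X with hq
    set v : ℕ → Polynomial ℂ := fun N => (A N).comp q * derivative^[N] (P n) with hv
    set Wp : Polynomial ℂ := -∑ i ∈ Finset.range (n+1), (A (i+1)).comp q * derivative^[i] (P n) with hWp
    have hWd : derivative Wp = (P m).comp q * P n := by
      rw [hWp, derivative_neg, derivative_sum]
      have h1 : ∀ i, derivative ((A (i+1)).comp q * derivative^[i] (P n)) = v (i+1) - v i := by
        intro i
        rw [derivative_mul, derivative_comp, hAd i]
        have hdq : derivative q = -1 := by simp [hq]
        rw [hdq, hv]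
        simp only [← Function.iterate_succ_apply' derivative i (P n)]
        ring
      rw [Finset.sum_congr rfl (fun i _ => h1 i), Finset.sum_range_sub (fun i => v i)]
      have hvn : v (n+1) = 0 := by
        have hz : derivative^[n+1] (P n) = 0 :=
          iterate_derivative_eq_zero (by rw [hPdeg]; omega)
        rw [hv]; simp only [hz, mul_zero]
      rw [hvn, hv]
      simp only [hA0, Function.iterate_zero, id_eq]
      ring
    have hcong : Set.EqOn (fun t : ℝ => (P m).eval ((x:ℂ) - (t:ℂ)) * (P n).eval (t:ℂ))
        (fun t : ℝ => (derivative Wp).eval (t:ℂ)) (Set.uIcc (-a) (x+a)) := by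
      intro t _
      simp only [hWd, eval_mul, eval_comp, hq, eval_sub, eval_C, eval_X]
    rw [intervalIntegral.integral_congr hcong, poly_ftc]
    have e1 : Wp.eval (((x + a : ℝ)) : ℂ) = 0 := by
      rw [hWp, eval_neg, eval_finset_sum]
      rw [Finset.sum_eq_zero, neg_zero]
      intro i hi
      rw [eval_mul, eval_comp]
      have hev : eval (((x + a : ℝ)) : ℂ) q = -(a:ℂ) := by
        rw [hq]
        simp only [eval_sub, eval_C, eval_X]
        push_cast
        ring
      rw [hev, hAa i, zero_mul]
    have e2 : Wp.eval (((-a : ℝ)) : ℂ)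
        = -∑ i ∈ Finset.range (n+1), d i * (A (i+1)).eval ((x:ℂ) + (a:ℂ)) := by
      rw [hWp, eval_neg, eval_finset_sum]
      congr 1
      apply Finset.sum_congr rfl
      intro i hi
      rw [eval_mul, eval_comp]
      have h3 : eval (((-a : ℝ)) : ℂ) q = (x:ℂ) + (a:ℂ) := by
        rw [hq]
        simp only [eval_sub, eval_C, eval_X]
        push_cast
        ring
      rw [h3, hd]
      push_cast
      ring
    rw [e1, e2]
    ring
  -- the alternative expansion of the convolution
  have hexp : ∀ x : ℝ, ∑ k ∈ Finset.range (m+n+2), ρ k * (P k).eval ((x:ℂ) + (a:ℂ))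
      = ∑ k ∈ Finset.range (m+n+2),
          (∑ i ∈ Finset.range (n+1), d i * e (i+1) k) * (P k).eval ((x:ℂ) + (a:ℂ)) := by
    intro x
    rw [← hρ x, hint x]
    rw [Finset.sum_congr rfl (fun i hi => by
      rw [hAevalP (i+1) (by have := Finset.mem_range.mp hi; omega) ((x:ℂ) + (a:ℂ))])]
    simp_rw [Finset.mul_sum]
    rw [Finset.sum_comm]
    apply Finset.sum_congr rfl
    intro k hk
    rw [Finset.sum_mul]
    apply Finset.sum_congr rfl
    intro i hi
    ring
  -- uniqueness of expansion coefficients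
  have hρj : ρ j = ∑ i ∈ Finset.range (n+1), d i * e (i+1) j := by
    have hzero : ∑ k ∈ Finset.range (m+n+2),
        C (ρ k - (∑ i ∈ Finset.range (n+1), d i * e (i+1) k)) * P k = 0 := by
      apply eq_zero_of_infinite_isRoot
      apply Set.infinite_of_injective_forall_mem (f := fun x : ℝ => (x : ℂ) + (a:ℂ))
      · intro x y hxy
        simp only [add_left_inj, Complex.ofReal_inj] at hxy
        exact hxy
      · intro x
        simp only [Set.mem_setOf_eq, IsRoot, eval_finset_sum, eval_mul, eval_C, sub_mul]
        rw [Finset.sum_sub_distrib, hexp x, sub_self]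
    have := sum_basis_eq_zero hPlc hPcoeff (m+n+2)
      (fun k => ρ k - (∑ i ∈ Finset.range (n+1), d i * e (i+1) k)) hzero j (by omega)
    exact sub_eq_zero.mp this
  -- the γ identity
  have hgamma : ∀ ν, 1 ≤ ν → ν ≤ j → γ (j - ν) j (m + ν - j) 0 = e ν j := by
    intro ν hν1 hνj
    have hsub : m - (j - ν) = m + ν - j := by omega
    have h1 : derivative^[j] (A ν) = ∑ k ∈ Finset.range (m+ν-j+1),
        C (γ (j-ν) j (m+ν-j) k) * derivative^[j] (P (k+j)) := by
      have hiter : derivative^[j] (A ν) = derivative^[j-ν] (P m) := by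
        conv_lhs => rw [show j = (j-ν) + ν from by omega,
          Function.iterate_add_apply, hAiter ν]
      rw [hiter, hγ (j-ν) j m (by omega), hsub]
    have h2 : derivative^[j] (A ν) = ∑ k ∈ Finset.range (m+ν-j+1),
        C (e ν (k+j)) * derivative^[j] (P (k+j)) := by
      rw [hApoly ν, iter_deriv_sum j]
      rw [Finset.sum_congr rfl (fun k _ => iterate_derivative_C_mul (e ν k) (P k) j)]
      rw [Finset.range_eq_Ico, ← Finset.sum_Ico_consecutive _ (Nat.zero_le j) (by omega : j ≤ m+ν+1)]
      have hz : ∑ k ∈ Finset.Ico 0 j, C (e ν k) * derivative^[j] (P k) = 0 := by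
        apply Finset.sum_eq_zero
        intro k hk
        have : k < j := (Finset.mem_Ico.mp hk).2
        rw [iterate_derivative_eq_zero (by rw [hPdeg]; omega), mul_zero]
      rw [hz, zero_add, Finset.sum_Ico_eq_sum_range]
      have hr : m + ν + 1 - j = m + ν - j + 1 := by omega
      rw [hr]
      apply Finset.sum_congr rfl
      intro k hk
      rw [add_comm j k]
    have hzero : ∑ k ∈ Finset.range (m+ν-j+1),
        C (γ (j-ν) j (m+ν-j) k - e ν (k+j)) * derivative^[j] (P (k+j)) = 0 := by
      simp only [map_sub, sub_mul]
      rw [Finset.sum_sub_distrib, ← h1, ← h2, sub_self]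
    have hQ1 : ∀ k, (derivative^[j] (P (k+j))).coeff k ≠ 0 := by
      intro k
      rw [Polynomial.coeff_iterate_derivative, nsmul_eq_mul]
      apply mul_ne_zero
      · exact Nat.cast_ne_zero.mpr (fun h => by have := Nat.descFactorial_eq_zero_iff_lt.mp h; omega)
      · exact hPlc (k+j)
    have hQ2 : ∀ k l, k < l → (derivative^[j] (P (k+j))).coeff l = 0 := by
      intro k l hkl
      rw [Polynomial.coeff_iterate_derivative, hPcoeff (k+j) (l+j) (by omega), smul_zero]
    have := sum_basis_eq_zero hQ1 hQ2 (m+ν-j+1)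
      (fun k => γ (j-ν) j (m+ν-j) k - e ν (k+j)) hzero 0 (by omega)
    have h0 : γ (j-ν) j (m+ν-j) 0 - e ν (0+j) = 0 := this
    rw [zero_add] at h0
    exact sub_eq_zero.mp h0
  -- final assembly
  rw [hρj]
  have hIcc : ∀ (f : ℕ → ℂ), ∑ i ∈ Finset.range (n+1), f (i+1) = ∑ ν ∈ Finset.Icc 1 (n+1), f ν := by
    intro f
    rw [← Finset.Ico_add_one_right_eq_Icc, Finset.sum_Ico_eq_sum_range]
    simp [add_comm]
  rw [show (∑ i ∈ Finset.range (n+1), d i * e (i+1) j)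
      = ∑ ν ∈ Finset.Icc 1 (n+1), d (ν-1) * e ν j from by
    rw [← hIcc (fun ν => d (ν-1) * e ν j)]
    simp]
  set M := max j (n+1) with hM
  have hd0 : ∀ ν, n+1 < ν → d (ν-1) = 0 := by
    intro ν hν
    rw [hd]
    simp only
    rw [iterate_derivative_eq_zero (by rw [hPdeg]; omega), eval_zero]
  have hext : ∑ ν ∈ Finset.Icc 1 (n+1), d (ν-1) * e ν j
      = ∑ ν ∈ Finset.Icc 1 M, d (ν-1) * e ν j := by
    apply Finset.sum_subset (Finset.Icc_subset_Icc_right (le_max_right _ _))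
    intro ν hν hν'
    have h1 : n+1 < ν := by
      simp only [Finset.mem_Icc] at hν hν'
      omega
    rw [hd0 ν h1, zero_mul]
  rw [hext]
  have hsplit : ∑ ν ∈ Finset.Ioc 0 j, d (ν-1) * e ν j + ∑ ν ∈ Finset.Ioc j M, d (ν-1) * e ν j
      = ∑ ν ∈ Finset.Ioc 0 M, d (ν-1) * e ν j :=
    Finset.sum_Ioc_consecutive _ (Nat.zero_le j) (le_max_left _ _)
  rw [show Finset.Icc 1 M = Finset.Ioc 0 M from Finset.Icc_add_one_left_eq_Ioc 0 M, ← hsplit]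
  congr 1
  · -- the γ part
    rw [show Finset.Icc 1 j = Finset.Ioc 0 j from Finset.Icc_add_one_left_eq_Ioc 0 j]
    apply Finset.sum_congr rfl
    intro ν hν
    have h1 : 1 ≤ ν ∧ ν ≤ j := by
      rw [Finset.mem_Ioc] at hν
      omega
    rw [← hgamma ν h1.1 h1.2, hd]
    ring
  · -- the b part
    rw [show Finset.Icc (j+1) (n+1) = Finset.Ioc j (n+1) from Finset.Icc_add_one_left_eq_Ioc j (n+1)]
    rw [show (∑ ν ∈ Finset.Ioc j M, d (ν-1) * e ν j)
        = ∑ ν ∈ Finset.Ioc j (n+1), d (ν-1) * e ν j from by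
      symm
      apply Finset.sum_subset (Finset.Ioc_subset_Ioc_right (le_max_right _ _))
      intro ν hν hν'
      have h1 : n+1 < ν := by
        simp only [Finset.mem_Ioc] at hν hν'
        omega
      rw [hd0 ν h1, zero_mul]]
    apply Finset.sum_congr rfl
    intro ν hν
    have hjν : j < ν := (Finset.mem_Ioc.mp hν).1
    rw [hd, he]
    simp only
    congr 1
    apply Finset.sum_congr rfl
    intro p hp
    have : j ≤ p + ν := by omega
    simp [hB, this, hc]
end

section
/- Let α be a complex number with ℜ(α) > −1 and let m, n be positive integers with n ≥ m. If n ≥ m+1, the Laguerre convolution coefficients are ρ̂_{j,n}^{m;(α)} = −(α−1)_{m+n+1−j}/(m+n+1−j)! for n+1 ≤ j ≤ m+n+1; ρ̂_{n,n}^{m;(α)} = (α)_m/m! for j = n; ρ̂_{j,n}^{m;(α)} = 0 for m+1 ≤ j ≤ n−1 (when n ≥ m+2); ρ̂_{m,n}^{m;(α)} = (α)_{n+1}/(n+1)! for j = m; and ρ̂_{j,n}^{m;(α)} = (α−1)_{m+n+1−j}/(m+n+1−j)! for 0 ≤ j ≤ m−1. If n = m, then ρ̂_{j,m}^{m;(α)}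 = −(α−1)_{2m+1−j}/(2m+1−j)! for m+1 ≤ j ≤ 2m+1; ρ̂_{m,m}^{m;(α)} = (α)_{m+1}/(m+1)! + (α)_m/m!; and ρ̂_{j,m}^{m;(α)} = (α−1)_{2m+1−j}/(2m+1−j)! for 0 ≤ j ≤ m−1. -/
open Polynomial

/-- Pochhammer symbol `(z)ₙ = z(z+1)⋯(z+n-1)` for a complex base. -/
noncomputable def poch (z : ℂ) (n : ℕ) : ℂ := (ascPochhammer ℂ n).eval z

/-- The Laguerre polynomial `L_n^{(α)}(x) = ((1+α)ₙ/n!) ₁F₁(-n; α+1; x)` (with the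
terminating confluent hypergeometric series written out). -/
noncomputable def laguerreL (α : ℂ) (n : ℕ) : Polynomial ℂ :=
  Polynomial.C (poch (1 + α) n / (n.factorial : ℂ)) *
    ∑ k ∈ Finset.range (n + 1),
      Polynomial.C (poch (-(n : ℂ)) k / (poch (α + 1) k * (k.factorial : ℂ))) *
        Polynomial.X ^ k

namespace Stmt19Aux

lemma poch_zero (z : ℂ) : poch z 0 = 1 := by simp [poch]

lemma poch_succ (z : ℂ) (n : ℕ) : poch z (n + 1) = poch z n * (z + n) := by
  simp [poch, ascPochhammer_succ_eval]

lemma poch_succ_left (z : ℂ) (n : ℕ) : poch z (n + 1) = z * poch (z + 1) n := by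
  simp [poch, ascPochhammer_succ_left, eval_comp, eval_mul]

lemma poch_one (z : ℂ) : poch z 1 = z := by
  rw [show (1:ℕ) = 0 + 1 from rfl, poch_succ, poch_zero]; ring

lemma poch_add (z : ℂ) (a b : ℕ) : poch z (a + b) = poch z a * poch (z + a) b := by
  simp [poch, ← ascPochhammer_mul, eval_mul, eval_comp]

lemma poch_ne_zero {z : ℂ} (hz : 0 < z.re) (n : ℕ) : poch z n ≠ 0 := by
  induction n with
  | zero => simp [poch_zero]
  | succ k ih =>
      rw [poch_succ]
      refine mul_ne_zero ih ?_
      intro h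
      have : (z + (k:ℂ)).re = 0 := by rw [h]; simp
      simp only [Complex.add_re, Complex.natCast_re] at this
      linarith [this, Nat.cast_nonneg (α := ℝ) k]

lemma fact_ne (n : ℕ) : (n.factorial : ℂ) ≠ 0 := by
  exact_mod_cast Nat.cast_ne_zero.mpr n.factorial_ne_zero

/-- `(-n)_k = (-1)^k n!/(n-k)!` for `k ≤ n`. -/
lemma poch_neg (n k : ℕ) (h : k ≤ n) :
    poch (-(n : ℂ)) k = (-1) ^ k * (n.factorial : ℂ) / ((n - k).factorial : ℂ) := by
  induction k with
  | zero => simp only [poch_zero, pow_zero, one_mul, Nat.sub_zero, div_self (Stmt19Aux.fact_ne n)]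
  | succ k ih =>
      have hk : k ≤ n := Nat.le_of_succ_le h
      rw [poch_succ, ih hk]
      have h1 : n - k = (n - (k+1)) + 1 := by omega
      have h2 : ((n - k).factorial : ℂ) = ((n - k : ℕ) : ℂ) * ((n - (k+1)).factorial : ℂ) := by
        rw [h1, Nat.factorial_succ]; push_cast [← h1]; ring_nf
      have h3 : ((n - k : ℕ) : ℂ) = (n : ℂ) - (k : ℂ) := by
        push_cast [Nat.cast_sub hk]; ring
      rw [h2, h3]
      have h4 : (n:ℂ) - k ≠ 0 := by
        rw [← h3]; exact_mod_cast Nat.cast_ne_zero.mpr (by omega : n - k ≠ 0)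
      have h5 : ((n - (k+1)).factorial : ℂ) ≠ 0 := Stmt19Aux.fact_ne _
      field_simp
      ring


variable (α : ℂ)

/-- exponential coefficient of the Laguerre polynomial: `k! * coeff k`. -/
noncomputable def g (n k : ℕ) : ℂ :=
  (-1) ^ k * poch (α + 1 + k) (n - k) / ((n - k).factorial : ℂ)

/-- normalized form of the Laguerre polynomial. -/
noncomputable def lag (n : ℕ) : Polynomial ℂ :=
  ∑ k ∈ Finset.range (n + 1), C (g α n k / (k.factorial : ℂ)) * X ^ k

noncomputable def aa (i : ℕ) : ℂ := poch α i / (i.factorial : ℂ)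
noncomputable def bb (r : ℕ) : ℂ := poch (α - 1) r / (r.factorial : ℂ)

lemma aa_zero : aa α 0 = 1 := by simp [aa, poch_zero]
lemma bb_zero : bb α 0 = 1 := by simp [bb, poch_zero]

lemma bb_succ (r : ℕ) : bb α (r + 1) = aa α (r + 1) - aa α r := by
  unfold bb aa
  rw [poch_succ_left, sub_add_cancel, poch_succ, Nat.factorial_succ]
  have h1 := fact_ne r
  have h2 : (r : ℂ) + 1 ≠ 0 := Nat.cast_add_one_ne_zero r
  push_cast
  field_simp
  ring

lemma lag_eq (hα : -1 < α.re) (n : ℕ) : laguerreL α n = lag α n := by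
  unfold laguerreL lag
  rw [Finset.mul_sum]
  refine Finset.sum_congr rfl fun k hk => ?_
  rw [Finset.mem_range] at hk
  have hk' : k ≤ n := by omega
  rw [← mul_assoc, ← C_mul]
  congr 1
  rw [poch_neg n k hk']
  have hsplit : poch (1 + α) n = poch (α + 1) k * poch (α + 1 + k) (n - k) := by
    rw [show (1 + α) = (α + 1) by ring, show n = k + (n - k) by omega, poch_add]
    rw [show k + (n-k) - k = n - k by omega]
  rw [hsplit]
  have hp : poch (α + 1) k ≠ 0 := poch_ne_zero (by simp; linarith) k
  have h1 := fact_ne n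
  have h2 := fact_ne k
  have h3 := fact_ne (n - k)
  unfold g
  field_simp

lemma coeff_lag (n k : ℕ) :
    (lag α n).coeff k = if k ≤ n then g α n k / (k.factorial : ℂ) else 0 := by
  unfold lag
  rw [finset_sum_coeff]
  simp only [coeff_C_mul, coeff_X_pow]
  rw [Finset.sum_congr rfl (fun i _ => by rw [mul_ite, mul_one, mul_zero]),
    Finset.sum_ite_eq (Finset.range (n+1)) k _]
  simp only [Finset.mem_range]
  split_ifs with h1 h2 h2 <;> first | rfl | omega

lemma natDegree_lag (n : ℕ) : (lag α n).natDegree ≤ n := by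
  rw [natDegree_le_iff_coeff_eq_zero]
  intro k hk
  rw [coeff_lag, if_neg (by omega)]

lemma coeff_lag_self (n : ℕ) : (lag α n).coeff n = (-1) ^ n / (n.factorial : ℂ) := by
  rw [coeff_lag, if_pos le_rfl]
  unfold g
  simp [poch_zero]

/-- recurrences for g -/
lemma g_zero_zero : g α 0 0 = 1 := by simp [g, poch_zero]

lemma g_rec_mid (n k : ℕ) (h1 : 1 ≤ k) (h2 : k ≤ n) :
    g α (n + 1) k = g α n k - g α n (k - 1) := by
  obtain ⟨k, rfl⟩ : ∃ k', k = k' + 1 := ⟨k - 1, by omega⟩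
  unfold g
  have e1 : n + 1 - (k + 1) = (n - (k+1)) + 1 := by omega
  have e2 : k + 1 - 1 = k := by omega
  have e3 : n - k = (n - (k+1)) + 1 := by omega
  rw [e1, e2, e3]
  set r := n - (k + 1) with hr
  have hc : (α + 1 + ((k+1:ℕ):ℂ)) = (α + 1 + (k:ℂ)) + 1 := by push_cast; ring
  rw [hc, poch_succ ((α + 1 + (k:ℂ)) + 1) r, poch_succ_left (α + 1 + (k:ℂ)) r,
    Nat.factorial_succ]
  have h3 := fact_ne r
  have h4 : (r : ℂ) + 1 ≠ 0 := Nat.cast_add_one_ne_zero r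
  push_cast
  field_simp
  ring

lemma g_rec_zero (n : ℕ) : g α (n + 1) 0 = g α n 0 + aa α (n + 1) := by
  unfold g aa
  simp only [pow_zero, one_mul, Nat.sub_zero, Nat.cast_zero, add_zero]
  rw [poch_succ (α + 1) n, poch_succ_left α n, Nat.factorial_succ]
  have h1 := fact_ne n
  have h2 : (n : ℂ) + 1 ≠ 0 := Nat.cast_add_one_ne_zero n
  push_cast
  field_simp
  ring

lemma g_rec_top (n : ℕ) : g α (n + 1) (n + 1) = - g α n n := by
  unfold g
  simp [poch_zero, pow_succ]
noncomputable def Fg (a : ℕ → ℂ) (n : ℕ) : Polynomial ℂ :=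
  ∑ i ∈ Finset.range (n + 1), C (a i) * X ^ (n - i)

lemma Fg_succ (a : ℕ → ℂ) (n : ℕ) : Fg a (n + 1) = X * Fg a n + C (a (n + 1)) := by
  unfold Fg
  rw [Finset.sum_range_succ, Finset.mul_sum]
  congr 1
  · refine Finset.sum_congr rfl fun i hi => ?_
    rw [Finset.mem_range] at hi
    rw [show n + 1 - i = (n - i) + 1 by omega, pow_succ]
    ring
  · simp

noncomputable def tr (N : ℕ) (P : Polynomial ℂ) : Polynomial ℂ :=
  ∑ k ∈ Finset.range N, C ((k.factorial : ℂ) * P.coeff k) * X ^ (k + 1)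

lemma coeff_tr (N : ℕ) (P : Polynomial ℂ) (k : ℕ) :
    (tr N P).coeff (k + 1) = if k < N then (k.factorial : ℂ) * P.coeff k else 0 := by
  unfold tr
  rw [finset_sum_coeff]
  have h : ∀ i ∈ Finset.range N,
      (C ((i.factorial : ℂ) * P.coeff i) * X ^ (i + 1)).coeff (k + 1)
        = if k = i then (i.factorial : ℂ) * P.coeff i else 0 := by
    intro i _
    rw [coeff_C_mul, coeff_X_pow]
    by_cases hki : k = i
    · simp [hki]
    · rw [if_neg (by omega), if_neg hki, mul_zero]
  rw [Finset.sum_congr rfl h, Finset.sum_ite_eq (Finset.range N) k _]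
  simp [Finset.mem_range]

lemma coeff_tr_zero (N : ℕ) (P : Polynomial ℂ) : (tr N P).coeff 0 = 0 := by
  unfold tr
  rw [finset_sum_coeff]
  refine Finset.sum_eq_zero fun i _ => ?_
  rw [coeff_C_mul, coeff_X_pow, if_neg (by omega), mul_zero]

lemma tr_inj {N : ℕ} {P Q : Polynomial ℂ} (hP : P.natDegree < N) (hQ : Q.natDegree < N)
    (h : tr N P = tr N Q) : P = Q := by
  ext k
  by_cases hk : k < N
  · have h2 := congrArg (fun R => R.coeff (k + 1)) h
    simp only [coeff_tr, if_pos hk] at h2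
    exact mul_left_cancel₀ (fact_ne k) h2
  · rw [coeff_eq_zero_of_natDegree_lt (lt_of_lt_of_le hP (by omega)),
        coeff_eq_zero_of_natDegree_lt (lt_of_lt_of_le hQ (by omega))]

lemma tr_sum {ι : Type*} (N : ℕ) (s : Finset ι) (f : ι → Polynomial ℂ) :
    tr N (∑ i ∈ s, f i) = ∑ i ∈ s, tr N (f i) := by
  unfold tr
  rw [Finset.sum_comm]
  refine Finset.sum_congr rfl fun k _ => ?_
  rw [finset_sum_coeff, Finset.mul_sum, map_sum, Finset.sum_mul]

lemma tr_C_mul (N : ℕ) (c : ℂ) (P : Polynomial ℂ) : tr N (C c * P) = C c * tr N P := by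
  unfold tr
  rw [Finset.mul_sum]
  refine Finset.sum_congr rfl fun k _ => ?_
  rw [coeff_C_mul, show (k.factorial : ℂ) * (c * P.coeff k) = c * ((k.factorial : ℂ) * P.coeff k) by ring,
    C_mul, mul_assoc]

lemma tr_monomial {N r : ℕ} (hrN : r < N) (e : ℂ) :
    tr N (C e * X ^ r) = C ((r.factorial : ℂ) * e) * X ^ (r + 1) := by
  unfold tr
  rw [Finset.sum_eq_single r]
  · rw [coeff_C_mul, coeff_X_pow, if_pos rfl, mul_one]
  · intro i _ hir
    rw [coeff_C_mul, coeff_X_pow, if_neg (fun hh => hir (by omega)), mul_zero, mul_zero,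
      map_zero, zero_mul]
  · intro hmem; exact absurd (Finset.mem_range.mpr hrN) hmem

lemma coeff_lag_zero_rec (n : ℕ) :
    (lag α (n + 1)).coeff 0 = (lag α n).coeff 0 + aa α (n + 1) := by
  rw [coeff_lag, coeff_lag, if_pos (Nat.zero_le _), if_pos (Nat.zero_le _), g_rec_zero]
  simp

lemma coeff_lag_succ_rec (n j : ℕ) :
    ((j+1).factorial : ℂ) * (lag α (n + 1)).coeff (j + 1)
      = ((j+1).factorial : ℂ) * (lag α n).coeff (j + 1)
        - (j.factorial : ℂ) * (lag α n).coeff j := by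
  rw [coeff_lag, coeff_lag, coeff_lag]
  have hf1 := fact_ne (j + 1)
  have hf2 := fact_ne j
  by_cases h1 : j + 1 ≤ n
  · rw [if_pos (by omega), if_pos h1, if_pos (by omega),
      g_rec_mid α n (j + 1) (by omega) h1]
    simp only [Nat.add_sub_cancel]
    field_simp
  · by_cases h2 : j = n
    · subst h2
      rw [if_pos (by omega), if_neg (by omega), if_pos (by omega), g_rec_top]
      field_simp
      ring
    · rw [if_neg (by omega), if_neg (by omega), if_neg (by omega)]
      simp

lemma tr_lag : ∀ (n N : ℕ), n < N → tr N (lag α n) = X * (Fg (aa α) n).comp (1 - X) := by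
  intro n
  induction n with
  | zero =>
      intro N hN
      have h0 : lag α 0 = C (1 : ℂ) * X ^ 0 := by
        unfold lag
        rw [Finset.sum_range_one]
        congr 1
        rw [g_zero_zero]
        simp
      rw [h0, tr_monomial hN]
      unfold Fg
      rw [Finset.sum_range_one, aa_zero]
      simp
  | succ n ih =>
      intro N hN
      have hn : n < N := by omega
      have key : tr N (lag α (n + 1)) = (1 - X) * tr N (lag α n) + C (aa α (n + 1)) * X := by
        ext idx
        rcases idx with _ | k
        · simp [sub_mul, one_mul, coeff_tr_zero, Polynomial.mul_coeff_zero, coeff_X_zero]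
        · rw [sub_mul, one_mul, coeff_add, coeff_sub, coeff_tr, coeff_tr, coeff_X_mul, coeff_C_mul]
          rcases k with _ | j
          · rw [coeff_tr_zero, coeff_X_one, mul_one]
            simp only [if_pos (show 0 < N by omega)]
            rw [Nat.factorial_zero, Nat.cast_one, one_mul, one_mul, coeff_lag_zero_rec α n]
            ring
          · have hX : (X : Polynomial ℂ).coeff (j + 1 + 1) = 0 := by
              rw [coeff_X, if_neg (by omega)]
            rw [coeff_tr, hX, mul_zero, add_zero]
            by_cases hjN : j + 1 < N
            · simp only [if_pos hjN, if_pos (show j < N by omega)]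
              exact coeff_lag_succ_rec α n j
            · simp only [if_neg hjN, zero_sub]
              by_cases hj : j < N
              · rw [if_pos hj, coeff_lag, if_neg (by omega), mul_zero, neg_zero]
              · rw [if_neg hj, neg_zero]
      rw [key, ih N hn, Fg_succ, add_comp, mul_comp, X_comp, C_comp]
      ring
lemma Fg_zero (a : ℕ → ℂ) (ha : a 0 = 1) : Fg a 0 = 1 := by
  unfold Fg; simp [ha]

lemma core_scal (a b : ℕ → ℂ) (ha : a 0 = 1) (hb0 : b 0 = 1)
    (hb : ∀ r, b (r + 1) = a (r + 1) - a r) (m n : ℕ) (hmn : m ≤ n) :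
    b (m + n + 2) + (∑ j ∈ Finset.range m, b (m + n + 1 - j) * a (j + 1))
      - ∑ i ∈ Finset.range (m + 1), b i * a (m + n + 2 - i)
      = -(a m * a (n + 1)) := by
  have h1 : b (m + n + 2) + (∑ j ∈ Finset.range m, b (m + n + 1 - j) * a (j + 1))
      = ∑ i ∈ Finset.range (m + 1), b (m + n + 2 - i) * a i := by
    rw [Finset.sum_range_succ', Nat.sub_zero, ha, mul_one, add_comm]
    congr 1
    exact Finset.sum_congr rfl fun i hi => by
      rw [show m + n + 2 - (i + 1) = m + n + 1 - i by omega]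
  rw [h1, ← Finset.sum_sub_distrib, Finset.sum_range_succ']
  have h3 : ∀ i ∈ Finset.range m,
      b (m + n + 2 - (i + 1)) * a (i + 1) - b (i + 1) * a (m + n + 2 - (i + 1))
        = a i * a (m + n + 1 - i) - a (i + 1) * a (m + n + 1 - (i + 1)) := by
    intro i hi
    rw [Finset.mem_range] at hi
    rw [show m + n + 2 - (i + 1) = (m + n - i) + 1 by omega, hb (m + n - i), hb i,
      show m + n + 1 - i = (m + n - i) + 1 by omega,
      show m + n + 1 - (i + 1) = m + n - i by omega]
    ring
  rw [Finset.sum_congr rfl h3,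
    Finset.sum_range_sub' (fun i => a i * a (m + n + 1 - i)) m]
  simp only [Nat.sub_zero, ha, hb0]
  rw [show m + n + 2 = (m + n + 1) + 1 by omega, hb (m + n + 1),
    show m + n + 1 - m = n + 1 by omega]
  ring

lemma core (a b : ℕ → ℂ) (ha : a 0 = 1) (hb0 : b 0 = 1)
    (hb : ∀ r, b (r + 1) = a (r + 1) - a r) :
    ∀ m n : ℕ, m ≤ n →
    (1 - X) * Fg a m * Fg a n
      = (∑ j ∈ Finset.range m, C (b (m + n + 1 - j)) * Fg a j)
        + C (a (n + 1)) * Fg a m + C (a m) * Fg a n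
        - ∑ i ∈ Finset.range (m + 1), C (b i) * Fg a (m + n + 1 - i) := by
  intro m
  induction m with
  | zero =>
      intro n hn
      rw [Finset.range_zero, Finset.sum_empty, Finset.sum_range_one, Fg_zero a ha,
        Nat.sub_zero, show 0 + n + 1 = n + 1 by omega, Fg_succ, ha, hb0]
      simp only [map_one]
      ring
  | succ m ih =>
      intro n hn
      have hmn : m ≤ n := by omega
      have IH := ih n hmn
      have hE1 : ∑ j ∈ Finset.range (m + 1), C (b (m + 1 + n + 1 - j)) * Fg a j
          = X * (∑ j ∈ Finset.range m, C (b (m + n + 1 - j)) * Fg a j)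
            + C (∑ j ∈ Finset.range m, b (m + n + 1 - j) * a (j + 1))
            + C (b (m + n + 2)) := by
        rw [Finset.sum_range_succ', Fg_zero a ha, mul_one,
          show m + 1 + n + 1 - 0 = m + n + 2 by omega]
        congr 1
        rw [Finset.mul_sum, map_sum, ← Finset.sum_add_distrib]
        exact Finset.sum_congr rfl fun j hj => by
          rw [show m + 1 + n + 1 - (j + 1) = m + n + 1 - j by omega, Fg_succ, C_mul]
          ring
      have hE2 : ∑ i ∈ Finset.range (m + 1 + 1), C (b i) * Fg a (m + 1 + n + 1 - i)
          = X * (∑ i ∈ Finset.range (m + 1), C (b i) * Fg a (m + n + 1 - i))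
            + C (∑ i ∈ Finset.range (m + 1), b i * a (m + n + 2 - i))
            + C (b (m + 1)) * Fg a (n + 1) := by
        rw [Finset.sum_range_succ, show m + 1 + n + 1 - (m + 1) = n + 1 by omega]
        congr 1
        rw [Finset.mul_sum, map_sum, ← Finset.sum_add_distrib]
        refine Finset.sum_congr rfl fun i hi => ?_
        rw [Finset.mem_range] at hi
        rw [show m + 1 + n + 1 - i = (m + n + 1 - i) + 1 by omega, Fg_succ, C_mul,
          show m + n + 2 - i = (m + n + 1 - i) + 1 by omega]
        ring
      have hsc' := congrArg C (core_scal a b ha hb0 hb m n hmn)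
      rw [map_sub, map_add, map_neg, map_mul] at hsc'
      have hb' := congrArg C (hb m)
      rw [map_sub] at hb'
      rw [hE1, hE2, Fg_succ a m, Fg_succ a n]
      linear_combination (X : Polynomial ℂ) * IH - hsc' + (X * Fg a n + C (a (n + 1))) * hb'
lemma beta_real : ∀ (i : ℕ) (j : ℕ) (x : ℝ),
    ∫ t in (0:ℝ)..x, (x - t) ^ i * t ^ j
      = ((i.factorial : ℝ) * (j.factorial : ℝ) / ((i + j + 1).factorial : ℝ)) * x ^ (i + j + 1) := by
  intro i
  induction i with
  | zero =>
      intro j x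
      simp only [pow_zero, one_mul, Nat.factorial_zero, Nat.cast_one, Nat.zero_add, zero_add]
      rw [integral_pow]
      rw [Nat.factorial_succ]
      have : ((j:ℝ) + 1) ≠ 0 := by positivity
      push_cast
      field_simp
      ring
  | succ i ih =>
      intro j x
      have hu : ∀ t ∈ Set.uIcc (0:ℝ) x,
          HasDerivAt (fun t : ℝ => (x - t) ^ (i + 1))
            (-((i + 1 : ℝ) * (x - t) ^ i)) t := by
        intro t _
        have h1 : HasDerivAt (fun t : ℝ => x - t) (-1) t := by
          simpa using (hasDerivAt_id t).const_sub x
        have := h1.fun_pow (i + 1)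
        simpa [mul_comm, mul_assoc, mul_left_comm] using this
      have hv : ∀ t ∈ Set.uIcc (0:ℝ) x,
          HasDerivAt (fun t : ℝ => t ^ (j + 1) / (j + 1)) (t ^ j) t := by
        intro t _
        have h1 := (hasDerivAt_pow (j + 1) t).div_const ((j:ℝ) + 1)
        have h2 : ((j:ℝ) + 1) ≠ 0 := by positivity
        simpa [mul_comm, mul_div_assoc, mul_div_cancel_left₀, h2] using h1
      have hint1 : IntervalIntegrable (fun t : ℝ => -((i + 1 : ℝ) * (x - t) ^ i)) MeasureTheory.volume 0 x := by
        apply Continuous.intervalIntegrable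
        fun_prop
      have hint2 : IntervalIntegrable (fun t : ℝ => t ^ j) MeasureTheory.volume 0 x := by
        apply Continuous.intervalIntegrable
        fun_prop
      have hparts := intervalIntegral.integral_mul_deriv_eq_deriv_mul hu hv hint1 hint2
      rw [hparts]
      have hne1 : ((j:ℝ) + 1) ≠ 0 := by positivity
      have hsimp : ∀ t ∈ Set.uIcc (0:ℝ) x, (fun t : ℝ => -((i + 1 : ℝ) * (x - t) ^ i) * (t ^ (j + 1) / (j + 1))) t
          = (fun t : ℝ => (-((i + 1 : ℝ) / ((j:ℝ) + 1))) * ((x - t) ^ i * t ^ (j + 1))) t := by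
        intro t _
        field_simp
      rw [intervalIntegral.integral_congr hsimp, intervalIntegral.integral_const_mul, ih (j + 1) x]
      rw [sub_self, zero_pow (Nat.succ_ne_zero i), zero_pow (Nat.succ_ne_zero j)]
      rw [show i + (j + 1) + 1 = (i + j + 1) + 1 by omega,
        show i + 1 + j + 1 = (i + j + 1) + 1 by omega,
        Nat.factorial_succ (i + j + 1), Nat.factorial_succ i, Nat.factorial_succ j]
      push_cast
      field_simp
      ring
lemma beta_complex (i j : ℕ) (x : ℝ) :
    ∫ t in (0:ℝ)..x, ((x:ℂ) - (t:ℂ)) ^ i * (t:ℂ) ^ j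
      = ((i.factorial : ℂ) * (j.factorial : ℂ) / ((i + j + 1).factorial : ℂ)) * (x:ℂ) ^ (i + j + 1) := by
  have h : ∀ t ∈ Set.uIcc (0:ℝ) x, (fun t : ℝ => ((x:ℂ) - (t:ℂ)) ^ i * (t:ℂ) ^ j) t
      = (fun t : ℝ => (((x - t) ^ i * t ^ j : ℝ) : ℂ)) t := by
    intro t _; push_cast; ring
  rw [intervalIntegral.integral_congr h, intervalIntegral.integral_ofReal, beta_real]
  push_cast
  ring

lemma eval_lag (n : ℕ) (y : ℂ) :
    (lag α n).eval y = ∑ k ∈ Finset.range (n + 1), (g α n k / (k.factorial : ℂ)) * y ^ k := by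
  unfold lag
  rw [eval_finset_sum]
  exact Finset.sum_congr rfl fun k _ => by rw [eval_mul, eval_C, eval_pow, eval_X]

noncomputable def convL (m n : ℕ) : Polynomial ℂ :=
  ∑ i ∈ Finset.range (m + 1), ∑ j ∈ Finset.range (n + 1),
    C ((g α m i / (i.factorial : ℂ)) * (g α n j / (j.factorial : ℂ)) *
        ((i.factorial : ℂ) * (j.factorial : ℂ) / ((i + j + 1).factorial : ℂ))) * X ^ (i + j + 1)

lemma int_eq (m n : ℕ) (x : ℝ) :
    (∫ t in (0:ℝ)..x, (lag α m).eval ((x:ℂ) - (t:ℂ)) * (lag α n).eval (t:ℂ))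
      = (convL α m n).eval (x:ℂ) := by
  have hc : ∀ (i j : ℕ) (c : ℂ), Continuous fun t : ℝ => c * (((x:ℂ) - (t:ℂ)) ^ i * (t:ℂ) ^ j) := by
    intro i j c
    fun_prop
  have step1 : (∫ t in (0:ℝ)..x, (lag α m).eval ((x:ℂ) - (t:ℂ)) * (lag α n).eval (t:ℂ))
      = ∫ t in (0:ℝ)..x, ∑ i ∈ Finset.range (m + 1), ∑ j ∈ Finset.range (n + 1),
          ((g α m i / (i.factorial : ℂ)) * (g α n j / (j.factorial : ℂ))) *
            (((x:ℂ) - (t:ℂ)) ^ i * (t:ℂ) ^ j) := by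
    refine intervalIntegral.integral_congr fun t _ => ?_
    rw [eval_lag, eval_lag, Finset.sum_mul]
    refine Finset.sum_congr rfl fun i _ => ?_
    rw [Finset.mul_sum]
    exact Finset.sum_congr rfl fun j _ => by ring
  rw [step1, intervalIntegral.integral_finset_sum (fun i _ =>
    Continuous.intervalIntegrable (continuous_finset_sum _ (fun j _ => hc i j _)) _ _)]
  have step2 : ∀ i ∈ Finset.range (m + 1),
      (∫ t in (0:ℝ)..x, ∑ j ∈ Finset.range (n + 1),
        ((g α m i / (i.factorial : ℂ)) * (g α n j / (j.factorial : ℂ))) *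
          (((x:ℂ) - (t:ℂ)) ^ i * (t:ℂ) ^ j))
      = ∑ j ∈ Finset.range (n + 1),
          ((g α m i / (i.factorial : ℂ)) * (g α n j / (j.factorial : ℂ))) *
            (((i.factorial : ℂ) * (j.factorial : ℂ) / ((i + j + 1).factorial : ℂ)) * (x:ℂ) ^ (i + j + 1)) := by
    intro i _
    rw [intervalIntegral.integral_finset_sum (fun j _ =>
      Continuous.intervalIntegrable (hc i j _) _ _)]
    exact Finset.sum_congr rfl fun j _ => by
      rw [intervalIntegral.integral_const_mul, beta_complex]
  rw [Finset.sum_congr rfl step2]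
  unfold convL
  rw [eval_finset_sum]
  refine Finset.sum_congr rfl fun i _ => ?_
  rw [eval_finset_sum]
  refine Finset.sum_congr rfl fun j _ => ?_
  rw [eval_mul, eval_C, eval_pow, eval_X]
  ring
lemma tr_lag_trunc (n N : ℕ) (h : n < N) :
    tr N (lag α n) = ∑ k ∈ Finset.range (n + 1), C (g α n k) * X ^ (k + 1) := by
  unfold lag
  rw [tr_sum]
  refine Finset.sum_congr rfl fun k hk => ?_
  rw [Finset.mem_range] at hk
  rw [tr_monomial (show k < N by omega), mul_comm ((k.factorial : ℂ)) _,
    div_mul_cancel₀ _ (fact_ne k)]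

lemma tr_convL (m n : ℕ) :
    tr (m + n + 2) (convL α m n) = tr (m + n + 2) (lag α m) * tr (m + n + 2) (lag α n) := by
  rw [tr_lag_trunc α m (m + n + 2) (by omega), tr_lag_trunc α n (m + n + 2) (by omega),
    Finset.sum_mul_sum]
  unfold convL
  rw [tr_sum]
  refine Finset.sum_congr rfl fun i hi => ?_
  rw [tr_sum]
  refine Finset.sum_congr rfl fun j hj => ?_
  rw [Finset.mem_range] at hi hj
  rw [tr_monomial (show i + j + 1 < m + n + 2 by omega)]
  have hc : ((i + j + 1).factorial : ℂ) *
      ((g α m i / (i.factorial : ℂ)) * (g α n j / (j.factorial : ℂ)) *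
        ((i.factorial : ℂ) * (j.factorial : ℂ) / ((i + j + 1).factorial : ℂ)))
      = g α m i * g α n j := by
    have h1 := fact_ne i
    have h2 := fact_ne j
    have h3 := fact_ne (i + j + 1)
    field_simp
  rw [hc, C_mul, show i + j + 1 + 1 = (i + 1) + (j + 1) by omega, pow_add]
  ring

lemma natDegree_convL_lt (m n : ℕ) : (convL α m n).natDegree < m + n + 2 := by
  have h : (convL α m n).natDegree ≤ m + n + 1 := by
    refine natDegree_sum_le_of_forall_le _ _ fun i hi => ?_
    refine natDegree_sum_le_of_forall_le _ _ fun j hj => ?_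
    rw [Finset.mem_range] at hi hj
    exact le_trans (natDegree_C_mul_X_pow_le _ _) (by omega)
  omega

lemma natDegree_sum_lag_lt (c : ℕ → ℂ) (m n : ℕ) :
    (∑ j ∈ Finset.range (m + n + 2), C (c j) * lag α j).natDegree < m + n + 2 := by
  have h : (∑ j ∈ Finset.range (m + n + 2), C (c j) * lag α j).natDegree ≤ m + n + 1 := by
    refine natDegree_sum_le_of_forall_le _ _ fun j hj => ?_
    rw [Finset.mem_range] at hj
    exact le_trans (natDegree_C_mul_le _ _) (le_trans (natDegree_lag α j) (by omega))
  omega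

lemma lin_indep : ∀ (N : ℕ) (c : ℕ → ℂ),
    (∑ j ∈ Finset.range N, C (c j) * lag α j) = 0 → ∀ j < N, c j = 0 := by
  intro N
  induction N with
  | zero => intro c _ j hj; omega
  | succ N ih =>
      intro c h j hj
      have hcoeff := congrArg (fun P => P.coeff N) h
      simp only [finset_sum_coeff, coeff_C_mul, coeff_zero] at hcoeff
      rw [Finset.sum_range_succ] at hcoeff
      have hz : ∀ i ∈ Finset.range N, c i * (lag α i).coeff N = 0 := by
        intro i hi
        rw [Finset.mem_range] at hi
        rw [coeff_eq_zero_of_natDegree_lt (lt_of_le_of_lt (natDegree_lag α i) hi), mul_zero]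
      rw [Finset.sum_eq_zero hz, zero_add, coeff_lag_self] at hcoeff
      have hcN : c N = 0 := by
        have hne : ((-1 : ℂ)) ^ N / (N.factorial : ℂ) ≠ 0 :=
          div_ne_zero (pow_ne_zero _ (by norm_num)) (fact_ne N)
        exact (mul_eq_zero.mp hcoeff).resolve_right hne
      rcases Nat.lt_succ_iff_lt_or_eq.mp hj with hj' | rfl
      · refine ih c ?_ j hj'
        rw [Finset.sum_range_succ, hcN, map_zero, zero_mul, add_zero] at h
        exact h
      · exact hcN

noncomputable def rhat (m n j : ℕ) : ℂ :=
  (if j < m then bb α (m + n + 1 - j) else 0) + (if j = m then aa α (n + 1) else 0)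
    + (if j = n then aa α m else 0) + (if n < j then -(bb α (m + n + 1 - j)) else 0)

lemma regroup (m n : ℕ) (hmn : m ≤ n) :
    ∑ j ∈ Finset.range (m + n + 2), C (rhat α m n j) * Fg (aa α) j
      = (∑ j ∈ Finset.range m, C (bb α (m + n + 1 - j)) * Fg (aa α) j)
        + C (aa α (n + 1)) * Fg (aa α) m + C (aa α m) * Fg (aa α) n
        - ∑ i ∈ Finset.range (m + 1), C (bb α i) * Fg (aa α) (m + n + 1 - i) := by
  have hterm : ∀ j ∈ Finset.range (m + n + 2), C (rhat α m n j) * Fg (aa α) j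
      = (if j < m then C (bb α (m + n + 1 - j)) * Fg (aa α) j else 0)
        + (if j = m then C (aa α (n + 1)) * Fg (aa α) j else 0)
        + (if j = n then C (aa α m) * Fg (aa α) j else 0)
        + (if n < j then -(C (bb α (m + n + 1 - j)) * Fg (aa α) j) else 0) := by
    intro j _
    unfold rhat
    split_ifs <;> simp <;> try ring
  rw [Finset.sum_congr rfl hterm, Finset.sum_add_distrib, Finset.sum_add_distrib,
    Finset.sum_add_distrib]
  have hB : ∑ j ∈ Finset.range (m + n + 2),
      (if j = m then C (aa α (n + 1)) * Fg (aa α) j else 0)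
      = C (aa α (n + 1)) * Fg (aa α) m := by
    rw [Finset.sum_ite_eq' (Finset.range (m + n + 2)) m, if_pos (Finset.mem_range.mpr (by omega))]
  have hD : ∑ j ∈ Finset.range (m + n + 2),
      (if j = n then C (aa α m) * Fg (aa α) j else 0)
      = C (aa α m) * Fg (aa α) n := by
    rw [Finset.sum_ite_eq' (Finset.range (m + n + 2)) n, if_pos (Finset.mem_range.mpr (by omega))]
  have hA : ∑ j ∈ Finset.range (m + n + 2),
      (if j < m then C (bb α (m + n + 1 - j)) * Fg (aa α) j else 0)
      = ∑ j ∈ Finset.range m, C (bb α (m + n + 1 - j)) * Fg (aa α) j := by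
    rw [← Finset.sum_subset (Finset.range_subset_range.mpr (by omega : m ≤ m + n + 2))
      (fun x _ hx => if_neg (by rw [Finset.mem_range] at hx; omega))]
    exact Finset.sum_congr rfl fun j hj =>
      if_pos (Finset.mem_range.mp hj)
  have hE : ∑ j ∈ Finset.range (m + n + 2),
      (if n < j then -(C (bb α (m + n + 1 - j)) * Fg (aa α) j) else 0)
      = -∑ i ∈ Finset.range (m + 1), C (bb α i) * Fg (aa α) (m + n + 1 - i) := by
    rw [← Finset.sum_subset
      (show Finset.Ico (n + 1) (m + n + 2) ⊆ Finset.range (m + n + 2) by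
        intro x hx; rw [Finset.mem_Ico] at hx; rw [Finset.mem_range]; omega)
      (fun x hx1 hx2 => if_neg (by
        rw [Finset.mem_range] at hx1
        rw [Finset.mem_Ico] at hx2
        omega))]
    rw [Finset.sum_congr rfl (fun j hj => if_pos (by rw [Finset.mem_Ico] at hj; omega))]
    rw [← Finset.sum_neg_distrib]
    refine Finset.sum_nbij' (fun j => m + n + 1 - j) (fun i => m + n + 1 - i) ?_ ?_ ?_ ?_ ?_
    · intro a ha; simp only [Finset.mem_Ico] at ha; simp only [Finset.mem_range]; omega
    · intro a ha; simp only [Finset.mem_range] at ha; simp only [Finset.mem_Ico]; omega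
    · intro a ha; simp only [Finset.mem_Ico] at ha; omega
    · intro a ha; simp only [Finset.mem_range] at ha; omega
    · intro a ha
      simp only [Finset.mem_Ico] at ha
      rw [show m + n + 1 - (m + n + 1 - a) = a by omega]
  rw [hA, hB, hD, hE]
  ring

lemma sum_comp' (s : Finset ℕ) (p : ℕ → Polynomial ℂ) (q : Polynomial ℂ) :
    (∑ i ∈ s, p i).comp q = ∑ i ∈ s, (p i).comp q := by
  simp [Polynomial.comp, Polynomial.eval₂_finset_sum]

lemma conv_expand (m n : ℕ) (hmn : m ≤ n) :
    convL α m n = ∑ j ∈ Finset.range (m + n + 2), C (rhat α m n j) * lag α j := by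
  refine tr_inj (natDegree_convL_lt α m n) (natDegree_sum_lag_lt α _ m n) ?_
  rw [tr_convL, tr_lag α m (m + n + 2) (by omega), tr_lag α n (m + n + 2) (by omega), tr_sum]
  have hterm : ∀ j ∈ Finset.range (m + n + 2),
      tr (m + n + 2) (C (rhat α m n j) * lag α j)
        = C (rhat α m n j) * (X * (Fg (aa α) j).comp (1 - X)) := by
    intro j hj
    rw [Finset.mem_range] at hj
    rw [tr_C_mul, tr_lag α j _ hj]
  rw [Finset.sum_congr rfl hterm]
  have hsum : ∑ j ∈ Finset.range (m + n + 2), C (rhat α m n j) * (X * (Fg (aa α) j).comp (1 - X))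
      = X * ((∑ j ∈ Finset.range (m + n + 2), C (rhat α m n j) * Fg (aa α) j).comp (1 - X)) := by
    rw [sum_comp', Finset.mul_sum]
    exact Finset.sum_congr rfl fun j _ => by rw [mul_comp, C_comp]; ring
  rw [hsum, regroup α m n hmn,
    ← core (aa α) (bb α) (aa_zero α) (bb_zero α) (bb_succ α) m n hmn]
  rw [mul_comp, mul_comp, sub_comp, one_comp, X_comp]
  ring
end Stmt19Aux

open Stmt19Aux

/-- **Theorem (Laguerre convolution coefficients).**
Let `ℜ(α) > -1`, `m, n` positive with `n ≥ m`, and `ρ j` the coefficients of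
`∫_0^x L_m^{(α)}(x-t) L_n^{(α)}(t) dt = ∑_{j=0}^{m+n+1} ρ̂_j L_j^{(α)}(x)`.  When
`n ≥ m+1`:
`ρ̂ j = -(α-1)_{m+n+1-j}/(m+n+1-j)!` for `n+1 ≤ j ≤ m+n+1`; `ρ̂ n = (α)_m/m!`;
`ρ̂ j = 0` for `m+1 ≤ j ≤ n-1`; `ρ̂ m = (α)_{n+1}/(n+1)!`; and
`ρ̂ j = (α-1)_{m+n+1-j}/(m+n+1-j)!` for `0 ≤ j ≤ m-1`.  When `n = m`:
`ρ̂ j = -(α-1)_{2m+1-j}/(2m+1-j)!` for `m+1 ≤ j ≤ 2m+1`;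
`ρ̂ m = (α)_{m+1}/(m+1)! + (α)_m/m!`; and `ρ̂ j = (α-1)_{2m+1-j}/(2m+1-j)!` for
`0 ≤ j ≤ m-1`. -/
theorem stmt19 (α : ℂ) (hα : -1 < α.re)
    (m n : ℕ) (hm : 0 < m) (hn : 0 < n) (hmn : m ≤ n)
    (ρ : ℕ → ℂ)
    (hρ : ∀ x : ℝ,
      (∫ t in (0 : ℝ)..x,
          (laguerreL α m).eval ((x : ℂ) - (t : ℂ)) * (laguerreL α n).eval (t : ℂ)) =
        ∑ j ∈ Finset.range (m + n + 2), ρ j * (laguerreL α j).eval (x : ℂ)) :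
    (m + 1 ≤ n →
      (∀ j : ℕ, n + 1 ≤ j → j ≤ m + n + 1 →
        ρ j = -(poch (α - 1) (m + n + 1 - j) / ((m + n + 1 - j).factorial : ℂ))) ∧
      ρ n = poch α m / (m.factorial : ℂ) ∧
      (∀ j : ℕ, m + 1 ≤ j → j + 1 ≤ n → ρ j = 0) ∧
      ρ m = poch α (n + 1) / ((n + 1).factorial : ℂ) ∧
      (∀ j : ℕ, j + 1 ≤ m →
        ρ j = poch (α - 1) (m + n + 1 - j) / ((m + n + 1 - j).factorial : ℂ))) ∧
    (n = m →
      (∀ j : ℕ, m + 1 ≤ j → j ≤ 2 * m + 1 →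
        ρ j = -(poch (α - 1) (2 * m + 1 - j) / ((2 * m + 1 - j).factorial : ℂ))) ∧
      ρ m = poch α (m + 1) / ((m + 1).factorial : ℂ) + poch α m / (m.factorial : ℂ) ∧
      (∀ j : ℕ, j + 1 ≤ m →
        ρ j = poch (α - 1) (2 * m + 1 - j) / ((2 * m + 1 - j).factorial : ℂ))) := by
  simp only [lag_eq α hα] at hρ
  have hpoly : convL α m n = ∑ j ∈ Finset.range (m + n + 2), C (ρ j) * lag α j := by
    apply Polynomial.eq_of_infinite_eval_eq
    refine Set.Infinite.mono ?_ (Set.infinite_range_of_injective Complex.ofReal_injective)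
    rintro _ ⟨x, rfl⟩
    rw [Set.mem_setOf_eq, ← int_eq α m n x, hρ x, eval_finset_sum]
    exact Finset.sum_congr rfl fun j _ => by rw [eval_mul, eval_C]
  have hdiff : ∑ j ∈ Finset.range (m + n + 2), C (ρ j - rhat α m n j) * lag α j = 0 := by
    have h2 : ∑ j ∈ Finset.range (m + n + 2), C (ρ j) * lag α j
        = ∑ j ∈ Finset.range (m + n + 2), C (rhat α m n j) * lag α j :=
      hpoly.symm.trans (conv_expand α m n hmn)
    calc ∑ j ∈ Finset.range (m + n + 2), C (ρ j - rhat α m n j) * lag α j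
        = ∑ j ∈ Finset.range (m + n + 2),
            (C (ρ j) * lag α j - C (rhat α m n j) * lag α j) := by
          exact Finset.sum_congr rfl fun j _ => by rw [map_sub, sub_mul]
      _ = 0 := by rw [Finset.sum_sub_distrib, h2, sub_self]
  have hval : ∀ j < m + n + 2, ρ j = rhat α m n j := fun j hj =>
    sub_eq_zero.mp (lin_indep α _ _ hdiff j hj)
  constructor
  · intro hmn1
    refine ⟨?_, ?_, ?_, ?_, ?_⟩
    · intro j hj1 hj2
      rw [hval j (by omega)]
      unfold rhat bb
      rw [if_neg (by omega), if_neg (by omega), if_neg (by omega), if_pos (by omega)]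
      ring
    · rw [hval n (by omega)]
      unfold rhat aa
      rw [if_neg (by omega), if_neg (by omega), if_pos rfl, if_neg (by omega)]
      ring
    · intro j hj1 hj2
      rw [hval j (by omega)]
      unfold rhat
      rw [if_neg (by omega), if_neg (by omega), if_neg (by omega), if_neg (by omega)]
      ring
    · rw [hval m (by omega)]
      unfold rhat aa
      rw [if_neg (by omega), if_pos rfl, if_neg (by omega), if_neg (by omega)]
      ring
    · intro j hj
      rw [hval j (by omega)]
      unfold rhat bb
      rw [if_pos (by omega), if_neg (by omega), if_neg (by omega), if_neg (by omega)]
      ring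
  · intro hnm
    subst hnm
    refine ⟨?_, ?_, ?_⟩
    · intro j hj1 hj2
      rw [hval j (by omega), show 2 * n + 1 - j = n + n + 1 - j by omega]
      unfold rhat bb
      rw [if_neg (by omega), if_neg (by omega), if_neg (by omega), if_pos (by omega)]
      ring
    · rw [hval n (by omega)]
      unfold rhat aa
      rw [if_neg (by omega), if_pos rfl, if_pos rfl, if_neg (by omega)]
      ring
    · intro j hj
      rw [hval j (by omega), show 2 * n + 1 - j = n + n + 1 - j by omega]
      unfold rhat bb
      rw [if_pos (by omega), if_neg (by omega), if_neg (by omega), if_neg (by omega)]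
      ring
end
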